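/- arXiv:1108.3632 — 7 statements merged into one kernel-verified Lean document; each statement's English description precedes it below -/
import Mathlib

section
/- Let w be a bispecial word of the language T^∞ of tangent words which is not diagonal. Then exactly one of the two desubstitutions applies to w, the resulting word δ(w) is again bispecial in T^∞, and it has the same number of two-sided extensions: card{(a,b) ∈ {0,1}² : a·δ(w)·b ∈ T^∞} = card{(a,b) ∈ {0,1}² : a·w·b ∈ T^∞}. -/
/-- Helper for deleting one letter `c` from each maximal run of `c`s.
The flag is `true` when we are at the start of the word or just after a letter `≠ c`,
i.e. when the next occurrence of `c` starts a maximal run and must be deleted. -/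
def delRunAux (c : Bool) : Bool → List Bool → List Bool
  | _, [] => []
  | del, a :: l =>
      if a = c then
        (if del then delRunAux c false l else a :: delRunAux c false l)
      else a :: delRunAux c true l

/-- Delete one letter `c` from each maximal run of `c`s in `w`. -/
def delRun (c : Bool) (w : List Bool) : List Bool := delRunAux c true w

/-- `Desub w v` : `v` is a desubstitution of the nonempty word `w`
(letter `0` is `false`, letter `1` is `true`):
if `11` does not occur in `w` one may delete one `0` from each maximal run of `0`s,
and if `00` does not occur in `w` one may delete one `1` from each maximal run of `1`s. -/
def Desub (w v : List Bool) : Prop :=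
  w ≠ [] ∧
    ((¬ [true, true] <:+: w ∧ v = delRun false w) ∨
     (¬ [false, false] <:+: w ∧ v = delRun true w))

/-- States of the three-state "diagonal" automaton. -/
inductive DiagState | Q | R | S
  deriving DecidableEq

/-- Transitions of the diagonal automaton:
Q→R on 0, R→Q on 1, R→S on 0, S→R on 1. -/
def diagStep : DiagState → Bool → Option DiagState
  | .Q, false => some .R
  | .R, true  => some .Q
  | .R, false => some .S
  | .S, true  => some .R
  | _, _ => none

/-- States of the eight-state "non-oscillating diagonal" automaton. -/
inductive NOState | B | R | S | T | U | C | D | E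
  deriving DecidableEq

/-- Transitions of the non-oscillating diagonal automaton:
B→R on 0, R→B on 1, R→S on 0, S→T on 1, T→S on 0, T→U on 1, U→E on 0, E→U on 1,
B→C on 1, C→D on 0, D→C on 1, D→E on 0. -/
def noStep : NOState → Bool → Option NOState
  | .B, false => some .R
  | .B, true  => some .C
  | .R, false => some .S
  | .R, true  => some .B
  | .S, true  => some .T
  | .T, false => some .S
  | .T, true  => some .U
  | .U, false => some .E
  | .C, false => some .D
  | .D, false => some .E
  | .D, true  => some .C
  | .E, true  => some .U
  | _, _ => none

/-- The list of states visited when reading a word from state `q`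
in a (partial deterministic) automaton, if the whole word can be read. -/
def autTraj {σ : Type} (step : σ → Bool → Option σ) : σ → List Bool → Option (List σ)
  | q, [] => some [q]
  | q, a :: l => (step q a).bind fun q' => (autTraj step q' l).map (q :: ·)

/-- A word is diagonal if it labels a path of the diagonal automaton
(all states are initial and accepting). -/
def Diagonal (w : List Bool) : Prop := ∃ q : DiagState, (autTraj diagStep q w).isSome

/-- A word is non-oscillating diagonal if it labels a path of the non-oscillating
diagonal automaton (all states are initial and accepting). -/
def NonOscDiagonal (w : List Bool) : Prop := ∃ q : NOState, (autTraj noStep q w).isSome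

/-- A word is tangent if some finite sequence of desubstitutions leads to a diagonal word. -/
def Tangent (w : List Bool) : Prop :=
  ∃ v, Relation.ReflTransGen Desub w v ∧ Diagonal v

/-- A word is tangent analytic if some finite sequence of desubstitutions leads to a
non-oscillating diagonal word. -/
def TangentAnalytic (w : List Bool) : Prop :=
  ∃ v, Relation.ReflTransGen Desub w v ∧ NonOscDiagonal v

/-- A word is `k`-balanced if any two factors of the same length have numbers of `1`s
differing by at most `k`. -/
def BalancedWord (k : ℕ) (w : List Bool) : Prop :=
  ∀ u v : List Bool, u <:+: w → v <:+: w → u.length = v.length →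
    |(u.count true : ℤ) - (v.count true : ℤ)| ≤ (k : ℤ)

/-- `pcount L n` is the complexity `p_n(L)`: the number of words of length `n` in `L`. -/
noncomputable def pcount (L : Set (List Bool)) (n : ℕ) : ℕ :=
  Set.ncard {w | w ∈ L ∧ w.length = n}

/-- The language `T^∞` of tangent words. -/
def Tinf : Set (List Bool) := {w | Tangent w}

/-- The language `T^ω` of tangent analytic words. -/
def Tomega : Set (List Bool) := {w | TangentAnalytic w}

/-- A word `w ∈ L` is bispecial when `0w`, `1w`, `w0`, `w1` all belong to `L`. -/
def Bispecial (L : Set (List Bool)) (w : List Bool) : Prop :=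
  w ∈ L ∧ (false :: w) ∈ L ∧ (true :: w) ∈ L ∧ (w ++ [false]) ∈ L ∧ (w ++ [true]) ∈ L

/-- The number of two-sided extensions `a·w·b` of `w` inside `L`. -/
noncomputable def extCount (L : Set (List Bool)) (w : List Bool) : ℕ :=
  Set.ncard {p : Bool × Bool | (p.1 :: (w ++ [p.2])) ∈ L}

/-- A weak bispecial word of `L`. -/
def WeakBispecial (L : Set (List Bool)) (w : List Bool) : Prop :=
  Bispecial L w ∧ extCount L w = 2

/-- A strong bispecial word of `L`. -/
def StrongBispecial (L : Set (List Bool)) (w : List Bool) : Prop :=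
  Bispecial L w ∧ extCount L w = 4

/-- `wb L n` : the number of weak bispecial words of length `n` in `L`. -/
noncomputable def wb (L : Set (List Bool)) (n : ℕ) : ℕ :=
  Set.ncard {w | WeakBispecial L w ∧ w.length = n}

/-- `sb L n` : the number of strong bispecial words of length `n` in `L`. -/
noncomputable def sb (L : Set (List Bool)) (n : ℕ) : ℕ :=
  Set.ncard {w | StrongBispecial L w ∧ w.length = n}

/-- A language is factorial if it is closed under taking factors. -/
def FactorialLang (L : Set (List Bool)) : Prop :=
  ∀ w ∈ L, ∀ u : List Bool, u <:+: w → u ∈ L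

/-- A language is extendable if every word extends on both sides within the language. -/
def ExtendableLang (L : Set (List Bool)) : Prop :=
  ∀ w ∈ L, (∃ a : Bool, (a :: w) ∈ L) ∧ (∃ b : Bool, (w ++ [b]) ∈ L)

/- ===== auxiliary lemmas ===== -/

section Aux

lemma autTraj_nil {σ} (step : σ → Bool → Option σ) (q : σ) :
    autTraj step q [] = some [q] := rfl

lemma autTraj_cons {σ} (step : σ → Bool → Option σ) (q : σ) (a : Bool) (l : List Bool) :
    autTraj step q (a :: l) = (step q a).bind fun q' => (autTraj step q' l).map (q :: ·) := rfl

lemma autTraj_isSome_append {σ} (step : σ → Bool → Option σ) :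
    ∀ (x : List Bool) (q : σ) (y : List Bool), (autTraj step q (x ++ y)).isSome →
      (autTraj step q x).isSome ∧ ∃ q', (autTraj step q' y).isSome := by
  intro x
  induction x with
  | nil => intro q y h; exact ⟨by simp [autTraj_nil], ⟨q, h⟩⟩
  | cons a x ih =>
    intro q y h
    rw [List.cons_append, autTraj_cons] at h
    cases hq : step q a with
    | none => rw [hq] at h; simp at h
    | some q1 =>
      rw [hq] at h
      simp only [Option.bind_some, Option.isSome_map] at h
      obtain ⟨h1, h2⟩ := ih q1 y h
      refine ⟨?_, h2⟩
      rw [autTraj_cons, hq]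
      simpa using h1

lemma diagonal_infix {u w : List Bool} (h : u <:+: w) (hd : Diagonal w) : Diagonal u := by
  obtain ⟨s, t, rfl⟩ := h
  obtain ⟨q, hq⟩ := hd
  rw [List.append_assoc] at hq
  obtain ⟨-, q', hq'⟩ := autTraj_isSome_append _ s q _ hq
  exact ⟨q', (autTraj_isSome_append _ u q' t hq').1⟩

lemma pair_infix_cons {x y a : Bool} {u : List Bool} (h : [x, y] <:+: a :: u) :
    (a = x ∧ u.head? = some y) ∨ [x, y] <:+: u := by
  obtain ⟨s, t, hst⟩ := h
  cases s with
  | nil =>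
    simp only [List.nil_append, List.cons_append, List.cons.injEq] at hst
    obtain ⟨rfl, rfl⟩ := hst
    exact Or.inl ⟨rfl, rfl⟩
  | cons b s' =>
    simp only [List.cons_append, List.cons.injEq] at hst
    exact Or.inr ⟨s', t, hst.2⟩

lemma pair_infix_snoc {x y b : Bool} {u : List Bool} (h : [x, y] <:+: u ++ [b]) :
    [x, y] <:+: u ∨ (y = b ∧ u.getLast? = some x) := by
  have h' : [y, x] <:+: b :: u.reverse := by
    have := List.reverse_infix.mpr h
    simpa using this
  rcases pair_infix_cons h' with ⟨rfl, hh⟩ | h2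
  · exact Or.inr ⟨rfl, by rw [← List.head?_reverse]; exact hh⟩
  · left
    rw [← List.reverse_infix]
    simpa using h2

lemma pair_infix_self (x y : Bool) (l : List Bool) : [x, y] <:+: x :: y :: l :=
  ⟨[], l, rfl⟩

/-- Alternating words can be read from state R of the diagonal automaton. -/
lemma alt_diag : ∀ (n : ℕ) (w : List Bool), w.length ≤ n →
    ¬ ([true, true] <:+: w) → ¬ ([false, false] <:+: w) →
    (autTraj diagStep DiagState.R w).isSome := by
  intro n
  induction n with
  | zero =>
    intro w hl _ _
    have hw : w = [] := List.length_eq_zero_iff.mp (Nat.le_zero.mp hl)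
    subst hw; simp [autTraj_nil]
  | succ n ih =>
    intro w hl h1 h0
    match w with
    | [] => simp [autTraj_nil]
    | [a] => cases a <;> simp [autTraj_cons, autTraj_nil, diagStep]
    | a :: b :: l =>
      have hne : b = !a := by
        cases a <;> cases b <;> simp_all
        · exact h0 (pair_infix_self false false l)
        · exact h1 (pair_infix_self true true l)
      have h1' : ¬ ([true, true] <:+: l) := fun h => h1 (List.infix_cons (List.infix_cons h))
      have h0' : ¬ ([false, false] <:+: l) := fun h => h0 (List.infix_cons (List.infix_cons h))
      have hll : l.length ≤ n := by simp at hl; omega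
      have := ih l hll h1' h0'
      subst hne
      cases a <;>
        simp_all [autTraj_cons, diagStep, Option.isSome_map]

/-- A tangent word containing both 00 and 11 is diagonal. -/
lemma tangent_both {u : List Bool} (hT : Tangent u)
    (h0 : [false, false] <:+: u) (h1 : [true, true] <:+: u) : Diagonal u := by
  obtain ⟨d, hc, hd⟩ := hT
  rcases hc.cases_head with rfl | ⟨v, hs, -⟩
  · exact hd
  · rcases hs.2 with ⟨hn, -⟩ | ⟨hn, -⟩
    · exact absurd h1 hn
    · exact absurd h0 hn

lemma tangent_step {u v : List Bool} (h : Desub u v) (hv : Tangent v) : Tangent u := by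
  obtain ⟨d, hc, hd⟩ := hv
  exact ⟨d, hc.head h, hd⟩

/-- Forced desubstitution: if a non-diagonal tangent word contains `cc`,
its (unique) desubstitution `delRun c` is tangent. -/
lemma tangent_delRun {u : List Bool} (c : Bool) (hT : Tangent u) (hnd : ¬ Diagonal u)
    (h : [c, c] <:+: u) : Tangent (delRun c u) := by
  obtain ⟨d, hc, hd⟩ := hT
  rcases hc.cases_head with rfl | ⟨v, hs, hrest⟩
  · exact absurd hd hnd
  · rcases hs.2 with ⟨hn, rfl⟩ | ⟨hn, rfl⟩
    · cases c
      · exact ⟨d, hrest, hd⟩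
      · exact absurd h hn
    · cases c
      · exact absurd h hn
      · exact ⟨d, hrest, hd⟩

/- computation lemmas for delRun -/

lemma delRunAux_cons (c del a : Bool) (l : List Bool) :
    delRunAux c del (a :: l) =
      if a = c then (if del then delRunAux c false l else a :: delRunAux c false l)
      else a :: delRunAux c true l := rfl

lemma delRunAux_append (c b : Bool) :
    ∀ (w : List Bool), w.getLast? = some c → ∀ del,
      delRunAux c del (w ++ [b]) = delRunAux c del w ++ [b] := by
  intro w
  induction w with
  | nil => intro h; simp at h
  | cons a l ih =>
    intro h del
    cases l with
    | nil =>
      simp only [List.getLast?_singleton, Option.some.injEq] at h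
      subst h
      by_cases hb : b = a <;> cases del <;> simp [delRunAux, hb]
    | cons a' l' =>
      rw [List.getLast?_cons_cons] at h
      rw [List.cons_append, delRunAux_cons, delRunAux_cons c del a (a' :: l'),
        ih h false, ih h true]
      by_cases ha : a = c <;> cases del <;> simp [ha]

lemma delRun_append (c b : Bool) (w : List Bool) (h : w.getLast? = some c) :
    delRun c (w ++ [b]) = delRun c w ++ [b] :=
  delRunAux_append c b w h true

lemma delRun_cons (c a : Bool) (w : List Bool) (h : w.head? = some c) :
    delRun c (a :: w) = a :: delRun c w := by
  cases w with
  | nil => simp at h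
  | cons x l =>
    simp only [List.head?_cons, Option.some.injEq] at h
    subst h
    by_cases ha : a = x <;> simp [delRun, delRunAux, ha]

end Aux

section Main

lemma both_patterns_contra {u w : List Bool} (hw : w <:+: u) (hnd : ¬ Diagonal w)
    (hu : u ∈ Tinf) (h0 : [false, false] <:+: u) (h1 : [true, true] <:+: u) : False :=
  hnd (diagonal_infix hw (tangent_both hu h0 h1))

lemma both_patterns_contra' (c : Bool) {u w : List Bool} (hw : w <:+: u) (hnd : ¬ Diagonal w)
    (hu : u ∈ Tinf) (hc : [c, c] <:+: u) (hcc : [!c, !c] <:+: u) : False := by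
  cases c
  · exact both_patterns_contra hw hnd hu hc (by simpa using hcc)
  · exact both_patterns_contra hw hnd hu (by simpa using hcc) hc

lemma np_cons_gen {c a : Bool} {u : List Bool} (hh : u.head? = some c)
    (h1 : ¬ [!c, !c] <:+: u) : ¬ [!c, !c] <:+: a :: u := by
  intro h
  rcases pair_infix_cons h with ⟨rfl, hh'⟩ | h'
  · cases c <;> simp_all
  · exact h1 h'

lemma np_snoc_gen {c b : Bool} {u : List Bool} (hl : u.getLast? = some c)
    (h1 : ¬ [!c, !c] <:+: u) : ¬ [!c, !c] <:+: u ++ [b] := by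
  intro h
  rcases pair_infix_snoc h with h' | ⟨-, hl'⟩
  · exact h1 h'
  · cases c <;> simp_all

lemma main_lemma (c : Bool) (w : List Bool) (hb : Bispecial Tinf w) (hnd : ¬ Diagonal w)
    (h1 : ¬ [!c, !c] <:+: w) (h2 : [c, c] <:+: w) :
    Bispecial Tinf (delRun c w) ∧ extCount Tinf (delRun c w) = extCount Tinf w := by
  have hne : w ≠ [] := by rintro rfl; rw [List.infix_nil] at h2; simp at h2
  -- last letter of w is c
  have hlast : w.getLast? = some c := by
    by_contra hL
    have hnec : w.getLast hne ≠ c := fun h => hL (by rw [List.getLast?_eq_getLast (l := w) hne, h])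
    have hdc : w.getLast hne = !c := by cases hx : w.getLast hne <;> cases c <;> simp_all
    obtain ⟨t, ht⟩ : ∃ t, w = t ++ [!c] :=
      ⟨w.dropLast, by rw [← hdc]; exact (List.dropLast_append_getLast hne).symm⟩
    have hsuff : [!c, !c] <:+: w ++ [!c] := ⟨t, [], by simp [ht]⟩
    have hc' : [c, c] <:+: w ++ [!c] := h2.trans (List.prefix_append w [!c]).isInfix
    have hu : (w ++ [!c]) ∈ Tinf := by
      cases c
      · simpa using hb.2.2.2.2
      · simpa using hb.2.2.2.1
    exact both_patterns_contra' c (List.prefix_append w [!c]).isInfix hnd hu hc' hsuff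
  -- first letter of w is c
  have hhead : w.head? = some c := by
    by_contra hL
    have hnec : w.head hne ≠ c := fun h => hL (by rw [List.head?_eq_head hne, h])
    have hdc : w.head hne = !c := by cases hx : w.head hne <;> cases c <;> simp_all
    obtain ⟨t, ht⟩ : ∃ t, w = (!c) :: t := by
      cases w with
      | nil => exact absurd rfl hne
      | cons x l => exact ⟨l, by rw [← hdc]; rfl⟩
    have hpre : [!c, !c] <:+: (!c) :: w := ⟨[], t, by rw [ht]; rfl⟩
    have hc' : [c, c] <:+: (!c) :: w := List.infix_cons h2
    have hu : ((!c) :: w) ∈ Tinf := by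
      cases c
      · simpa using hb.2.2.1
      · simpa using hb.2.1
    exact both_patterns_contra' c (List.infix_cons (List.infix_refl w)) hnd hu hc' hpre
  -- computation lemmas
  have hheadb : ∀ b : Bool, (w ++ [b]).head? = some c := fun b => by
    rw [List.head?_append_of_ne_nil w hne]; exact hhead
  have comp_cons : ∀ a : Bool, delRun c (a :: w) = a :: delRun c w :=
    fun a => delRun_cons c a w hhead
  have comp_app : ∀ b : Bool, delRun c (w ++ [b]) = delRun c w ++ [b] :=
    fun b => delRun_append c b w hlast
  have comp : ∀ a b : Bool, delRun c (a :: (w ++ [b])) = a :: (delRun c w ++ [b]) := by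
    intro a b
    rw [delRun_cons c a _ (hheadb b), comp_app b]
  -- transfer of tangency
  have key : ∀ u : List Bool, [c, c] <:+: u → ¬ [!c, !c] <:+: u → w <:+: u →
      (u ∈ Tinf ↔ delRun c u ∈ Tinf) := by
    intro u hcc hncc hwu
    constructor
    · intro hu
      exact tangent_delRun c hu (fun hd => hnd (diagonal_infix hwu hd)) hcc
    · intro hv
      refine tangent_step ⟨?_, ?_⟩ hv
      · rintro rfl; rw [List.infix_nil] at hcc; simp at hcc
      · cases c
        · exact Or.inl ⟨by simpa using hncc, rfl⟩
        · exact Or.inr ⟨by simpa using hncc, rfl⟩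
  have wpre : ∀ b : Bool, w <:+: w ++ [b] := fun b => (List.prefix_append w [b]).isInfix
  have hBv : Bispecial Tinf (delRun c w) := by
    refine ⟨(key w h2 h1 (List.infix_refl w)).mp hb.1, ?_, ?_, ?_, ?_⟩
    · rw [← comp_cons false]
      exact (key (false :: w) (List.infix_cons h2) (np_cons_gen hhead h1)
        (List.infix_cons (List.infix_refl w))).mp hb.2.1
    · rw [← comp_cons true]
      exact (key (true :: w) (List.infix_cons h2) (np_cons_gen hhead h1)
        (List.infix_cons (List.infix_refl w))).mp hb.2.2.1
    · rw [← comp_app false]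
      exact (key (w ++ [false]) (h2.trans (wpre false)) (np_snoc_gen hlast h1)
        (wpre false)).mp hb.2.2.2.1
    · rw [← comp_app true]
      exact (key (w ++ [true]) (h2.trans (wpre true)) (np_snoc_gen hlast h1)
        (wpre true)).mp hb.2.2.2.2
  refine ⟨hBv, ?_⟩
  have hset : {p : Bool × Bool | (p.1 :: (delRun c w ++ [p.2])) ∈ Tinf} =
      {p : Bool × Bool | (p.1 :: (w ++ [p.2])) ∈ Tinf} := by
    ext ⟨a, b⟩
    simp only [Set.mem_setOf_eq]
    rw [← comp a b]
    exact (key (a :: (w ++ [b])) (List.infix_cons (h2.trans (wpre b)))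
      (np_cons_gen (hheadb b) (np_snoc_gen hlast h1))
      (List.infix_cons (wpre b))).symm
  unfold extCount
  rw [hset]

end Main

/-- a bispecial word of `T^∞` which is not diagonal can be desubstituted in
exactly one way, and its desubstitution is again bispecial in `T^∞` with the same number
of two-sided extensions. -/
theorem bispecial_desubstitution (w : List Bool) (hb : Bispecial Tinf w)
    (hnd : ¬ Diagonal w) :
    Xor' (¬ [true, true] <:+: w) (¬ [false, false] <:+: w) ∧
    (∃! v, Desub w v) ∧
    ∀ v, Desub w v → Bispecial Tinf v ∧ extCount Tinf v = extCount Tinf w := by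
  obtain ⟨d, hc, hd⟩ := hb.1
  rcases hc.cases_head with rfl | ⟨v0, hs, -⟩
  · exact absurd hd hnd
  obtain ⟨hne, hdisj⟩ := hs
  have notboth : ¬ (¬ [true, true] <:+: w ∧ ¬ [false, false] <:+: w) := by
    rintro ⟨hA, hB⟩
    exact hnd ⟨DiagState.R, alt_diag w.length w le_rfl hA hB⟩
  rcases hdisj with ⟨hA, -⟩ | ⟨hA, -⟩
  · have hB : [false, false] <:+: w := by
      by_contra hB
      exact notboth ⟨hA, hB⟩
    have hmain := main_lemma false w hb hnd (by simpa using hA) hB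
    refine ⟨Or.inl ⟨hA, fun h => h hB⟩,
      ⟨delRun false w, ⟨hne, Or.inl ⟨hA, rfl⟩⟩, ?_⟩, ?_⟩
    · rintro y ⟨-, ⟨-, rfl⟩ | ⟨h, -⟩⟩
      · rfl
      · exact absurd hB h
    · rintro v ⟨-, ⟨-, rfl⟩ | ⟨h, -⟩⟩
      · exact ⟨hmain.1, hmain.2⟩
      · exact absurd hB h
  · have hB : [true, true] <:+: w := by
      by_contra hB
      exact notboth ⟨hB, hA⟩
    have hmain := main_lemma true w hb hnd (by simpa using hA) hB
    refine ⟨Or.inr ⟨hA, fun h => h hB⟩,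
      ⟨delRun true w, ⟨hne, Or.inr ⟨hA, rfl⟩⟩, ?_⟩, ?_⟩
    · rintro y ⟨-, ⟨h, -⟩ | ⟨-, rfl⟩⟩
      · exact absurd hB h
      · rfl
    · rintro v ⟨-, ⟨h, -⟩ | ⟨-, rfl⟩⟩
      · exact absurd hB h
      · exact ⟨hmain.1, hmain.2⟩
end

section
/- The language T^∞ of tangent words is factorial and extendable: every factor of a tangent word is tangent, and for every tangent word w there exist letters a, b ∈ {0,1} such that aw and wb are tangent. -/
namespace TangentAux

/-! ### Automaton runs -/

def runA {σ : Type} (step : σ → Bool → Option σ) : σ → List Bool → Option σ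
  | q, [] => some q
  | q, a :: l => (step q a).bind fun q' => runA step q' l

lemma autTraj_isSome_iff {σ : Type} (step : σ → Bool → Option σ) :
    ∀ (w : List Bool) (q : σ), (autTraj step q w).isSome ↔ (runA step q w).isSome := by
  intro w
  induction w with
  | nil => intro q; simp [autTraj, runA]
  | cons a l ih =>
    intro q
    cases h : step q a with
    | none => simp [autTraj, runA, h]
    | some q' => simp [autTraj, runA, h, ih]

lemma runA_append {σ : Type} (step : σ → Bool → Option σ) :
    ∀ (l₁ l₂ : List Bool) (q : σ),
      runA step q (l₁ ++ l₂) = (runA step q l₁).bind fun q' => runA step q' l₂ := by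
  intro l₁
  induction l₁ with
  | nil => intro l₂ q; simp [runA]
  | cons a l ih => intro l₂ q; cases h : step q a <;> simp [runA, h, ih]

lemma runA_infix {σ : Type} (step : σ → Bool → Option σ) {u w : List Bool}
    (h : u <:+: w) {q : σ} (hq : (runA step q w).isSome) :
    ∃ q', (runA step q' u).isSome := by
  obtain ⟨s, t, rfl⟩ := h
  rw [runA_append] at hq
  cases hs : runA step q (s ++ u) with
  | none => rw [hs] at hq; simp at hq
  | some q2 =>
    rw [runA_append] at hs
    cases hss : runA step q s with
    | none => rw [hss] at hs; simp at hs
    | some q1 =>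
      rw [hss] at hs
      rw [Option.bind_some] at hs
      exact ⟨q1, by rw [hs]; rfl⟩

lemma diagonal_infix {u w : List Bool} (h : u <:+: w) (hw : Diagonal w) : Diagonal u := by
  obtain ⟨q, hq⟩ := hw
  rw [autTraj_isSome_iff] at hq
  obtain ⟨q', hq'⟩ := runA_infix diagStep h hq
  exact ⟨q', (autTraj_isSome_iff diagStep u q').2 hq'⟩

lemma diagonal_nil : Diagonal [] := ⟨.Q, rfl⟩

lemma diag_succ (q : DiagState) : ∃ b q', diagStep q b = some q' := by
  cases q
  · exact ⟨false, .R, rfl⟩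
  · exact ⟨true, .Q, rfl⟩
  · exact ⟨true, .R, rfl⟩

lemma diag_pred (q : DiagState) : ∃ a p, diagStep p a = some q := by
  cases q
  · exact ⟨true, .R, rfl⟩
  · exact ⟨false, .Q, rfl⟩
  · exact ⟨false, .R, rfl⟩

lemma diagonal_cons {w : List Bool} (hw : Diagonal w) : ∃ a, Diagonal (a :: w) := by
  obtain ⟨q, hq⟩ := hw
  rw [autTraj_isSome_iff] at hq
  obtain ⟨a, p, hp⟩ := diag_pred q
  refine ⟨a, p, ?_⟩
  rw [autTraj_isSome_iff]
  simpa [runA, hp] using hq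

lemma diagonal_concat {w : List Bool} (hw : Diagonal w) : ∃ b, Diagonal (w ++ [b]) := by
  obtain ⟨q, hq⟩ := hw
  rw [autTraj_isSome_iff] at hq
  cases hr : runA diagStep q w with
  | none => rw [hr] at hq; simp at hq
  | some q2 =>
    obtain ⟨b, q3, hb⟩ := diag_succ q2
    refine ⟨b, q, ?_⟩
    rw [autTraj_isSome_iff, runA_append, hr]
    simp [runA, hb]

end TangentAux
namespace TangentAux

/-! ### delRun lemmas -/

def flagA (c : Bool) : Bool → List Bool → Bool
  | d, [] => d
  | _, a :: l => flagA c (a != c) l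

lemma delRunAux_append (c : Bool) :
    ∀ (w e : List Bool) (d : Bool),
      delRunAux c d (w ++ e) = delRunAux c d w ++ delRunAux c (flagA c d w) e := by
  intro w
  induction w with
  | nil => intro e d; simp [flagA, delRunAux]
  | cons a l ih =>
    intro e d
    by_cases h : a = c
    · subst h
      cases d <;> simp [delRunAux, flagA, ih]
    · have hb : (a != c) = true := by simp [h]
      simp [delRunAux, flagA, h, ih, hb]

lemma flagA_concat (c : Bool) : ∀ (w : List Bool) (d a : Bool),
    flagA c d (w ++ [a]) = (a != c) := by
  intro w
  induction w with
  | nil => intro d a; simp [flagA]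
  | cons b l ih => intro d a; simp [flagA, ih]

lemma delRunAux_head_ne (c : Bool) (w : List Bool) (h : w.head? ≠ some c) (d d' : Bool) :
    delRunAux c d w = delRunAux c d' w := by
  cases w with
  | nil => rfl
  | cons a l =>
    have ha : ¬ a = c := by simpa using h
    simp [delRunAux, ha]

lemma delRunAux_false (c : Bool) (w : List Bool) :
    delRunAux c false w = delRunAux c true w ∨
      delRunAux c false w = c :: delRunAux c true w := by
  cases w with
  | nil => exact Or.inl rfl
  | cons a l =>
    by_cases h : a = c
    · subst h; exact Or.inr (by simp [delRunAux])
    · exact Or.inl (by simp [delRunAux, h])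

lemma delRun_infix (c : Bool) {u w : List Bool} (h : u <:+: w) :
    delRun c u <:+: delRun c w := by
  obtain ⟨s, t, rfl⟩ := h
  unfold delRun
  rw [List.append_assoc, delRunAux_append, delRunAux_append]
  rcases delRunAux_false c u with h1 | h1
  · cases hf : flagA c true s with
    | false =>
      exact ⟨delRunAux c true s, delRunAux c (flagA c false u) t, by simp [h1]⟩
    | true =>
      exact ⟨delRunAux c true s, delRunAux c (flagA c true u) t, by simp⟩
  · cases hf : flagA c true s with
    | false =>
      exact ⟨delRunAux c true s ++ [c], delRunAux c (flagA c false u) t, by simp [h1]⟩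
    | true =>
      exact ⟨delRunAux c true s, delRunAux c (flagA c true u) t, by simp⟩

/-! ### occurrences of [x,x] -/

lemma pair_cons {x a : Bool} {w : List Bool} (h : [x, x] <:+: a :: w) :
    (a = x ∧ w.head? = some x) ∨ [x, x] <:+: w := by
  rcases List.infix_cons_iff.1 h with h | h
  · obtain ⟨t, ht⟩ := h
    simp only [List.cons_append, List.cons.injEq] at ht
    obtain ⟨rfl, h2⟩ := ht
    left
    exact ⟨rfl, by rw [← h2]; rfl⟩
  · exact Or.inr h

lemma pair_concat {x a : Bool} {w : List Bool} (h : [x, x] <:+: w ++ [a]) :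
    (a = x ∧ w.reverse.head? = some x) ∨ [x, x] <:+: w := by
  have h' : [x, x] <:+: a :: w.reverse := by
    have := List.reverse_infix.2 h
    simpa using this
  rcases pair_cons h' with h' | h'
  · exact Or.inl h'
  · exact Or.inr (by simpa using List.reverse_infix.1 (by simpa using h'))

end TangentAux
namespace TangentAux

lemma desub_of (c : Bool) (w v : List Bool) (hw : w ≠ [])
    (hno : ¬ [!c, !c] <:+: w) (hv : v = delRun c w) : Desub w v := by
  refine ⟨hw, ?_⟩
  cases c
  · exact Or.inl ⟨by simpa using hno, hv⟩
  · exact Or.inr ⟨by simpa using hno, hv⟩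

lemma desub_elim {w v : List Bool} (h : Desub w v) :
    ∃ c, w ≠ [] ∧ ¬ [!c, !c] <:+: w ∧ v = delRun c w := by
  obtain ⟨hw, h | h⟩ := h
  · exact ⟨false, hw, by simpa using h.1, h.2⟩
  · exact ⟨true, hw, by simpa using h.1, h.2⟩

/-- Right extension through one desubstitution. -/
lemma desub_right (c : Bool) (w : List Bool) (hw : w ≠ [])
    (hno : ¬ [!c, !c] <:+: w) (b : Bool) :
    ∃ x e, Desub (w ++ x :: e) (delRun c w ++ [b]) := by
  obtain rfl | ⟨w₀, a, rfl⟩ := List.eq_nil_or_concat w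
  · exact absurd rfl hw
  simp only [List.concat_eq_append] at hno ⊢
  have hflag : flagA c true (w₀ ++ [a]) = (a != c) := flagA_concat c w₀ true a
  have hcnc : ¬ c = !c := by cases c <;> simp
  have hncc : ¬ (!c) = c := fun h => hcnc h.symm
  by_cases hb : b = c
  · subst b
    by_cases ha : a = c
    · subst a
      -- append [c]
      refine ⟨c, [], desub_of c _ _ (by simp) ?_ ?_⟩
      · intro hcon
        rcases pair_concat hcon with ⟨h1, _⟩ | h1
        · exact hcnc h1
        · exact hno h1
      · symm
        rw [show (w₀ ++ [c] ++ [c] : List Bool) = (w₀ ++ [c]) ++ [c] by simp, delRun,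
          delRunAux_append c (w₀ ++ [c]) [c] true, hflag]
        simp [delRunAux, delRun]
    · -- append [c, c]
      refine ⟨c, [c], desub_of c _ _ (by simp) ?_ ?_⟩
      · intro hcon
        rw [show (w₀ ++ [a] ++ (c :: [c]) : List Bool) = (w₀ ++ [a] ++ [c]) ++ [c] by simp]
          at hcon
        rcases pair_concat hcon with ⟨h1, _⟩ | h1
        · exact hcnc h1
        · rcases pair_concat h1 with ⟨h2, _⟩ | h2
          · exact hcnc h2
          · exact hno h2
      · symm
        rw [show (w₀ ++ [a] ++ (c :: [c]) : List Bool) = (w₀ ++ [a]) ++ [c, c] by simp, delRun,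
          delRunAux_append c (w₀ ++ [a]) [c, c] true, hflag,
          show (a != c) = true by simp [ha]]
        simp [delRunAux, delRun]
  · have hb' : b = !c := by cases b <;> cases c <;> simp_all
    subst b
    by_cases ha : a = c
    · subst a
      -- append [!c]
      refine ⟨!c, [], desub_of c _ _ (by simp) ?_ ?_⟩
      · intro hcon
        rcases pair_concat hcon with ⟨_, h1⟩ | h1
        · simp at h1
        · exact hno h1
      · symm
        rw [show (w₀ ++ [c] ++ [!c] : List Bool) = (w₀ ++ [c]) ++ [!c] by simp, delRun,
          delRunAux_append c (w₀ ++ [c]) [!c] true, hflag]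
        simp [delRunAux, delRun, hncc]
    · -- append [c, !c]
      refine ⟨c, [!c], desub_of c _ _ (by simp) ?_ ?_⟩
      · intro hcon
        rw [show (w₀ ++ [a] ++ (c :: [!c]) : List Bool) = (w₀ ++ [a] ++ [c]) ++ [!c] by simp]
          at hcon
        rcases pair_concat hcon with ⟨_, h1⟩ | h1
        · simp at h1
        · rcases pair_concat h1 with ⟨h2, _⟩ | h2
          · exact hcnc h2
          · exact hno h2
      · symm
        rw [show (w₀ ++ [a] ++ (c :: [!c]) : List Bool) = (w₀ ++ [a]) ++ [c, !c] by simp, delRun,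
          delRunAux_append c (w₀ ++ [a]) [c, !c] true, hflag,
          show (a != c) = true by simp [ha]]
        simp [delRunAux, delRun, hncc]

/-- Left extension through one desubstitution. -/
lemma desub_left (c : Bool) (w : List Bool) (hw : w ≠ [])
    (hno : ¬ [!c, !c] <:+: w) (b : Bool) :
    ∃ e x, Desub (e ++ x :: w) (b :: delRun c w) := by
  have hcnc : ¬ c = !c := by cases c <;> simp
  have hncc : ¬ (!c) = c := fun h => hcnc h.symm
  by_cases hb : b = c
  · subst b
    by_cases ha : w.head? = some c
    · -- prepend [c]
      obtain ⟨l, rfl⟩ : ∃ l, w = c :: l := by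
        cases w with
        | nil => simp at ha
        | cons a l =>
          have h1 : a = c := by simpa using ha
          exact ⟨l, by rw [h1]⟩
      refine ⟨[], c, desub_of c _ _ (by simp) ?_ ?_⟩
      · intro hcon
        rcases pair_cons hcon with ⟨h1, _⟩ | h1
        · exact hcnc h1
        · exact hno h1
      · simp [delRun, delRunAux]
    · -- prepend [c, c]
      refine ⟨[c], c, desub_of c _ _ (by simp) ?_ ?_⟩
      · intro hcon
        rcases pair_cons hcon with ⟨h1, _⟩ | h1
        · exact hcnc h1
        · rcases pair_cons h1 with ⟨h2, _⟩ | h2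
          · exact hcnc h2
          · exact hno h2
      · have h1 := delRunAux_head_ne c w ha false true
        simp [delRun, delRunAux, h1]
  · have hb' : b = !c := by cases b <;> cases c <;> simp_all
    subst b
    by_cases ha : w.head? = some c
    · -- prepend [!c]
      refine ⟨[], !c, desub_of c _ _ (by simp) ?_ ?_⟩
      · intro hcon
        rcases pair_cons hcon with ⟨_, h1⟩ | h1
        · rw [ha] at h1
          simp at h1
        · exact hno h1
      · simp [delRun, delRunAux, hncc]
    · -- prepend [!c, c]
      refine ⟨[!c], c, desub_of c _ _ (by simp) ?_ ?_⟩
      · intro hcon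
        rcases pair_cons hcon with ⟨_, h1⟩ | h1
        · simp at h1
        · rcases pair_cons h1 with ⟨h2, _⟩ | h2
          · exact hcnc h2
          · exact hno h2
      · have h1 := delRunAux_head_ne c w ha false true
        simp [delRun, delRunAux, hncc, h1]

end TangentAux
namespace TangentAux

lemma tangent_step {w v : List Bool} (h : Desub w v) (hv : Tangent v) : Tangent w := by
  obtain ⟨v', hch, hd⟩ := hv
  exact ⟨v', Relation.ReflTransGen.head h hch, hd⟩

lemma tangent_factor {w : List Bool} (hw : Tangent w) : ∀ u, u <:+: w → Tangent u := by
  obtain ⟨v, hchain, hdiag⟩ := hw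
  induction hchain using Relation.ReflTransGen.head_induction_on with
  | refl => exact fun u hu => ⟨u, Relation.ReflTransGen.refl, diagonal_infix hu hdiag⟩
  | head hstep _ ih =>
    intro u hu
    obtain ⟨c, hne, hno, rfl⟩ := desub_elim hstep
    rcases eq_or_ne u [] with rfl | hune
    · exact ⟨[], Relation.ReflTransGen.refl, diagonal_nil⟩
    · exact tangent_step (desub_of c u _ hune (fun hc => hno (hc.trans hu)) rfl)
        (ih _ (delRun_infix c hu))

lemma tangent_right {w : List Bool} (hw : Tangent w) : ∃ b, Tangent (w ++ [b]) := by
  obtain ⟨v, hchain, hdiag⟩ := hw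
  induction hchain using Relation.ReflTransGen.head_induction_on with
  | refl =>
    obtain ⟨b, hb⟩ := diagonal_concat hdiag
    exact ⟨b, _, Relation.ReflTransGen.refl, hb⟩
  | head hstep _ ih =>
    obtain ⟨c, hne, hno, rfl⟩ := desub_elim hstep
    obtain ⟨b, hb⟩ := ih
    obtain ⟨x, e, hd⟩ := desub_right c _ hne hno b
    have ht := tangent_step hd hb
    exact ⟨x, tangent_factor ht _ ⟨[], e, by simp⟩⟩

lemma tangent_left {w : List Bool} (hw : Tangent w) : ∃ a, Tangent (a :: w) := by
  obtain ⟨v, hchain, hdiag⟩ := hw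
  induction hchain using Relation.ReflTransGen.head_induction_on with
  | refl =>
    obtain ⟨a, ha⟩ := diagonal_cons hdiag
    exact ⟨a, _, Relation.ReflTransGen.refl, ha⟩
  | head hstep _ ih =>
    obtain ⟨c, hne, hno, rfl⟩ := desub_elim hstep
    obtain ⟨b, hb⟩ := ih
    obtain ⟨e, x, hd⟩ := desub_left c _ hne hno b
    have ht := tangent_step hd hb
    exact ⟨x, tangent_factor ht _ ⟨e, [], by simp⟩⟩

end TangentAux

/-- `T^∞` is factorial and extendable. -/
theorem tangent_factorial_extendable :
    (∀ w, Tangent w → ∀ u : List Bool, u <:+: w → Tangent u) ∧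
    (∀ w, Tangent w → ∃ a b : Bool, Tangent (a :: w) ∧ Tangent (w ++ [b])) := by
  constructor
  · exact fun w hw => TangentAux.tangent_factor hw
  · intro w hw
    obtain ⟨a, ha⟩ := TangentAux.tangent_left hw
    obtain ⟨b, hb⟩ := TangentAux.tangent_right hw
    exact ⟨a, b, ha, hb⟩
end

section
/- The language T^ω of tangent analytic words is factorial and extendable: every factor of a tangent analytic word is tangent analytic, and for every tangent analytic word w there exist letters a, b ∈ {0,1} such that aw and wb are tangent analytic. -/
/-! ### Auxiliary machinery -/

section Aut
variable {σ : Type} (step : σ → Bool → Option σ)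

/-- Final state of a run, if the word can be read. -/
def autRun : σ → List Bool → Option σ
  | q, [] => some q
  | q, a :: l => (step q a).bind fun q' => autRun q' l

lemma autTraj_isSome_iff : ∀ (l : List Bool) (q : σ),
    (autTraj step q l).isSome ↔ (autRun step q l).isSome := by
  intro l
  induction l with
  | nil => intro q; simp [autTraj, autRun]
  | cons a l ih =>
      intro q
      cases h : step q a <;> simp [autTraj, autRun, h, ih]

lemma autRun_append : ∀ (l1 l2 : List Bool) (q : σ),
    autRun step q (l1 ++ l2) = (autRun step q l1).bind fun q' => autRun step q' l2 := by
  intro l1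
  induction l1 with
  | nil => intro l2 q; simp [autRun]
  | cons a l ih =>
      intro l2 q
      cases h : step q a <;> simp [autRun, h, ih]

end Aut

lemma nonOsc_iff (w : List Bool) :
    NonOscDiagonal w ↔ ∃ q : NOState, (autRun noStep q w).isSome := by
  unfold NonOscDiagonal
  exact exists_congr fun q => autTraj_isSome_iff noStep w q

lemma nonOsc_nil : NonOscDiagonal [] := ⟨.B, by simp [autTraj]⟩

lemma autRun_isSome_append {σ : Type} (step : σ → Bool → Option σ) {l1 l2 : List Bool} {q : σ}
    (h : (autRun step q (l1 ++ l2)).isSome) :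
    ∃ q', autRun step q l1 = some q' ∧ (autRun step q' l2).isSome := by
  rw [autRun_append] at h
  cases h1 : autRun step q l1 with
  | none => rw [h1] at h; simp at h
  | some q' => rw [h1] at h; exact ⟨q', rfl, h⟩

lemma nonOsc_infix {u w : List Bool} (h : u <:+: w) (hw : NonOscDiagonal w) :
    NonOscDiagonal u := by
  obtain ⟨s, t, rfl⟩ := h
  rw [nonOsc_iff] at hw ⊢
  obtain ⟨q, hq⟩ := hw
  obtain ⟨q1, hq1, _⟩ := autRun_isSome_append noStep hq
  obtain ⟨q2, _, hq2⟩ := autRun_isSome_append noStep (by simp [hq1] : (autRun noStep q (s ++ u)).isSome)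
  exact ⟨q2, hq2⟩

lemma noStep_out : ∀ q : NOState, ∃ a q', noStep q a = some q' := by
  intro q
  cases q
  · exact ⟨false, .R, rfl⟩
  · exact ⟨false, .S, rfl⟩
  · exact ⟨true, .T, rfl⟩
  · exact ⟨false, .S, rfl⟩
  · exact ⟨false, .E, rfl⟩
  · exact ⟨false, .D, rfl⟩
  · exact ⟨false, .E, rfl⟩
  · exact ⟨true, .U, rfl⟩

lemma noStep_in : ∀ q : NOState, ∃ q' a, noStep q' a = some q := by
  intro q
  cases q
  · exact ⟨.R, true, rfl⟩
  · exact ⟨.B, false, rfl⟩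
  · exact ⟨.R, false, rfl⟩
  · exact ⟨.S, true, rfl⟩
  · exact ⟨.T, true, rfl⟩
  · exact ⟨.B, true, rfl⟩
  · exact ⟨.C, false, rfl⟩
  · exact ⟨.U, false, rfl⟩

lemma nonOsc_cons {w : List Bool} (hw : NonOscDiagonal w) :
    ∃ a, NonOscDiagonal (a :: w) := by
  rw [nonOsc_iff] at hw
  obtain ⟨q, hq⟩ := hw
  obtain ⟨q', a, h⟩ := noStep_in q
  exact ⟨a, (nonOsc_iff _).2 ⟨q', by simp [autRun, h, hq]⟩⟩

lemma nonOsc_concat {w : List Bool} (hw : NonOscDiagonal w) :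
    ∃ b, NonOscDiagonal (w ++ [b]) := by
  rw [nonOsc_iff] at hw
  obtain ⟨q, hq⟩ := hw
  obtain ⟨qe, hqe⟩ := Option.isSome_iff_exists.1 hq
  obtain ⟨b, q', h⟩ := noStep_out qe
  refine ⟨b, (nonOsc_iff _).2 ⟨q, ?_⟩⟩
  rw [autRun_append, hqe]
  simp [autRun, h]
/-! ### delRun lemmas -/

/-- The flag after reading `l` starting with flag `flag`. -/
def nextFlag (c : Bool) : Bool → List Bool → Bool
  | flag, [] => flag
  | _, a :: l => nextFlag c (if a = c then false else true) l

lemma delRunAux_append_s8 (c : Bool) : ∀ (l1 l2 : List Bool) (flag : Bool),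
    delRunAux c flag (l1 ++ l2) = delRunAux c flag l1 ++ delRunAux c (nextFlag c flag l1) l2 := by
  intro l1
  induction l1 with
  | nil => intro l2 flag; rfl
  | cons a l ih =>
      intro l2 flag
      by_cases h : a = c <;> by_cases hf : flag = true <;>
        simp [delRunAux, nextFlag, h, hf, ih]

lemma nextFlag_append (c : Bool) : ∀ (l1 l2 : List Bool) (flag : Bool),
    nextFlag c flag (l1 ++ l2) = nextFlag c (nextFlag c flag l1) l2 := by
  intro l1
  induction l1 with
  | nil => intro l2 flag; rfl
  | cons a l ih => intro l2 flag; simp [nextFlag, ih]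

lemma delRunAux_true_suffix (c : Bool) (u : List Bool) :
    delRunAux c true u <:+ delRunAux c false u := by
  cases u with
  | nil => exact List.suffix_refl _
  | cons a l =>
      by_cases h : a = c
      · subst h
        simp only [delRunAux, if_pos rfl, if_true, if_false]
        exact ⟨[a], rfl⟩
      · simp only [delRunAux, if_neg h]
        exact List.suffix_refl _

lemma delRun_suffix_delRunAux (c flag : Bool) (u : List Bool) :
    delRun c u <:+ delRunAux c flag u := by
  cases flag
  · exact delRunAux_true_suffix c u
  · exact List.suffix_refl _

lemma delRun_infix (c : Bool) {u w : List Bool} (h : u <:+: w) :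
    delRun c u <:+: delRun c w := by
  obtain ⟨s, t, rfl⟩ := h
  obtain ⟨p, hp⟩ := delRun_suffix_delRunAux c (nextFlag c true s) u
  refine ⟨delRunAux c true s ++ p, delRunAux c (nextFlag c (nextFlag c true s) u) t, ?_⟩
  unfold delRun
  rw [List.append_assoc s u t, delRunAux_append_s8, delRunAux_append_s8, ← hp]
  simp [delRun, List.append_assoc]

lemma delRun_cons_cons (c a : Bool) (x : List Bool) :
    delRun c (a :: c :: x) = a :: delRun c (c :: x) := by
  by_cases h : a = c <;> simp [delRun, delRunAux, h]

lemma delRun_cons_ne (c : Bool) (x : List Bool) :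
    delRun c (c :: (!c) :: x) = delRun c ((!c) :: x) := by
  cases c <;> simp [delRun, delRunAux]

lemma delRun_concat_last (c b : Bool) (x : List Bool) :
    delRun c ((x ++ [c]) ++ [b]) = delRun c (x ++ [c]) ++ [b] := by
  unfold delRun
  rw [delRunAux_append_s8]
  have h1 : nextFlag c true (x ++ [c]) = false := by
    rw [nextFlag_append]; simp [nextFlag]
  rw [h1]
  by_cases h : b = c <;> simp [delRunAux, h]

lemma delRun_concat_ne (c : Bool) (x : List Bool) :
    delRun c ((x ++ [!c]) ++ [c]) = delRun c (x ++ [!c]) := by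
  unfold delRun
  rw [delRunAux_append_s8]
  have h1 : nextFlag c true (x ++ [!c]) = true := by
    rw [nextFlag_append]; cases c <;> simp [nextFlag]
  rw [h1]
  simp [delRunAux]

/-! ### forbidden factor lemmas -/

lemma not_bad_cons_of_head (c a : Bool) {x' : List Bool} (hx : ¬ [!c, !c] <:+: c :: x') :
    ¬ [!c, !c] <:+: a :: c :: x' := by
  intro h
  rcases List.infix_cons_iff.1 h with hp | hi
  · have h2 := (List.cons_prefix_cons.1 (List.cons_prefix_cons.1 hp).2).1
    cases c <;> simp_all
  · exact hx hi

lemma not_bad_cons_c (c : Bool) {x : List Bool} (hx : ¬ [!c, !c] <:+: x) :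
    ¬ [!c, !c] <:+: c :: x := by
  intro h
  rcases List.infix_cons_iff.1 h with hp | hi
  · have h1 := (List.cons_prefix_cons.1 hp).1
    cases c <;> simp_all
  · exact hx hi

lemma bad_infix_reverse (d : Bool) (x : List Bool) :
    [d, d] <:+: x.reverse ↔ [d, d] <:+: x := by
  constructor
  · intro h; simpa using List.reverse_infix.2 h
  · intro h; simpa using List.reverse_infix.2 h

lemma not_bad_concat_of_last (c b : Bool) {x' : List Bool} (hx : ¬ [!c, !c] <:+: x' ++ [c]) :
    ¬ [!c, !c] <:+: (x' ++ [c]) ++ [b] := by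
  intro h
  have h' : [!c, !c] <:+: b :: c :: x'.reverse := by
    have := (bad_infix_reverse _ _).2 h
    simpa using this
  have hx' : ¬ [!c, !c] <:+: c :: x'.reverse := by
    intro hh
    exact hx ((bad_infix_reverse _ _).1 (by simpa using hh))
  exact not_bad_cons_of_head c b hx' h'

lemma not_bad_concat_c (c : Bool) {x : List Bool} (hx : ¬ [!c, !c] <:+: x) :
    ¬ [!c, !c] <:+: x ++ [c] := by
  intro h
  have h' : [!c, !c] <:+: c :: x.reverse := by
    have := (bad_infix_reverse _ _).2 h
    simpa using this
  have hx' : ¬ [!c, !c] <:+: x.reverse := by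
    intro hh
    exact hx ((bad_infix_reverse _ _).1 (by simpa using hh))
  exact not_bad_cons_c c hx' h'

/-! ### Desub and TangentAnalytic lemmas -/

lemma desub_iff {w v : List Bool} :
    Desub w v ↔ w ≠ [] ∧ ∃ c, ¬([!c, !c] <:+: w) ∧ v = delRun c w := by
  unfold Desub
  constructor
  · rintro ⟨h, h1 | h2⟩
    · exact ⟨h, false, by simpa using h1.1, h1.2⟩
    · exact ⟨h, true, by simpa using h2.1, h2.2⟩
  · rintro ⟨h, c, hc, hv⟩
    cases c
    · exact ⟨h, Or.inl ⟨by simpa using hc, hv⟩⟩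
    · exact ⟨h, Or.inr ⟨by simpa using hc, hv⟩⟩

lemma ta_of_nonOsc {w : List Bool} (h : NonOscDiagonal w) : TangentAnalytic w :=
  ⟨w, .refl, h⟩

lemma ta_head {w v : List Bool} (h : Desub w v) (hv : TangentAnalytic v) :
    TangentAnalytic w := by
  obtain ⟨v', ch, hv'⟩ := hv
  exact ⟨v', .head h ch, hv'⟩
/-- `T^ω` is factorial and extendable. -/
theorem tangent_analytic_factorial_extendable :
    (∀ w, TangentAnalytic w → ∀ u : List Bool, u <:+: w → TangentAnalytic u) ∧
    (∀ w, TangentAnalytic w →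
      ∃ a b : Bool, TangentAnalytic (a :: w) ∧ TangentAnalytic (w ++ [b])) := by
  constructor
  · rintro w ⟨v, chain, hv⟩ u hu
    induction chain using Relation.ReflTransGen.head_induction_on generalizing u with
    | refl => exact ta_of_nonOsc (nonOsc_infix hu hv)
    | head hstep _ ih =>
        rcases eq_or_ne u [] with rfl | hne
        · exact ta_of_nonOsc nonOsc_nil
        · obtain ⟨-, c, hc, rfl⟩ := desub_iff.1 hstep
          have hcu : ¬ [!c, !c] <:+: u := fun h => hc (h.trans hu)
          exact ta_head (desub_iff.2 ⟨hne, c, hcu, rfl⟩) (ih _ (delRun_infix c hu))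
  · rintro w ⟨v, chain, hv⟩
    induction chain using Relation.ReflTransGen.head_induction_on with
    | refl =>
        obtain ⟨a, ha⟩ := nonOsc_cons hv
        obtain ⟨b, hb⟩ := nonOsc_concat hv
        exact ⟨a, b, ta_of_nonOsc ha, ta_of_nonOsc hb⟩
    | @head x y hstep hchain ih =>
        obtain ⟨a, b, ha, hb⟩ := ih
        have hyTA : TangentAnalytic y := ⟨v, hchain, hv⟩
        obtain ⟨hne, c, hc, rfl⟩ := desub_iff.1 hstep
        have hleft : ∃ a', TangentAnalytic (a' :: x) := by
          cases x with
          | nil => exact absurd rfl hne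
          | cons h x' =>
              by_cases hh : h = c
              · subst hh
                refine ⟨a, ta_head (desub_iff.2 ⟨List.cons_ne_nil _ _, h,
                  not_bad_cons_of_head h a hc, (delRun_cons_cons h a x').symm⟩) ha⟩
              · have hh' : h = !c := by cases h <;> cases c <;> simp_all
                subst hh'
                refine ⟨c, ta_head (desub_iff.2 ⟨List.cons_ne_nil _ _, c,
                  not_bad_cons_c c hc, (delRun_cons_ne c x').symm⟩) hyTA⟩
        have hright : ∃ b', TangentAnalytic (x ++ [b']) := by
          rcases x.eq_nil_or_concat with rfl | ⟨x', e, rfl⟩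
          · exact absurd rfl hne
          · rw [List.concat_eq_append] at *
            by_cases he : e = c
            · subst he
              refine ⟨b, ta_head (desub_iff.2 ⟨by simp, e,
                not_bad_concat_of_last e b hc, (delRun_concat_last e b x').symm⟩) hb⟩
            · have he' : e = !c := by cases e <;> cases c <;> simp_all
              subst he'
              refine ⟨c, ta_head (desub_iff.2 ⟨by simp, c,
                not_bad_concat_c c hc, (delRun_concat_ne c x').symm⟩) hyTA⟩
        obtain ⟨a', ha'⟩ := hleft
        obtain ⟨b', hb'⟩ := hright
        exact ⟨a', b', ha', hb'⟩
end

section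
/- A binary word w is 1-balanced if and only if there is a finite sequence w = w_0, w_1, …, w_k in which each w_{i+1} is a desubstitution of w_i and w_k is the empty word. -/
@[simp] lemma D_nil (d : Bool) : delRunAux false d [] = [] := rfl
@[simp] lemma D_true (d : Bool) (l : List Bool) :
    delRunAux false d (true :: l) = true :: delRunAux false true l := rfl
@[simp] lemma D_false_t (l : List Bool) :
    delRunAux false true (false :: l) = delRunAux false false l := rfl
@[simp] lemma D_false_f (l : List Bool) :
    delRunAux false false (false :: l) = false :: delRunAux false false l := rfl

def st (d : Bool) (l : List Bool) : Bool := l.foldl (fun _ a => a) d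
@[simp] lemma st_nil (d : Bool) : st d [] = d := rfl
@[simp] lemma st_cons (d a : Bool) (l : List Bool) : st d (a :: l) = st a l := rfl
lemma st_append (d : Bool) (l1 l2 : List Bool) : st d (l1 ++ l2) = st (st d l1) l2 := by
  simp [st, List.foldl_append]

lemma D_append (d : Bool) (l1 l2 : List Bool) :
    delRunAux false d (l1 ++ l2) = delRunAux false d l1 ++ delRunAux false (st d l1) l2 := by
  induction l1 generalizing d with
  | nil => simp
  | cons a l ih => cases a <;> cases d <;> simp [ih]

@[simp] lemma st_concat (d b : Bool) (l : List Bool) : st d (l ++ [b]) = b := by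
  simp [st_append]

lemma st_dest (d : Bool) (l : List Bool) :
    (l = [] ∧ st d l = d) ∨ ∃ l', l = l' ++ [st d l] := by
  rcases List.eq_nil_or_concat l with rfl | ⟨l', b, rfl⟩
  · exact Or.inl ⟨rfl, rfl⟩
  · exact Or.inr ⟨l', by simp⟩

lemma D_split (l : List Bool) (d : Bool) (a b : List Bool)
    (h : delRunAux false d l = a ++ b) :
    ∃ x y, l = x ++ y ∧ delRunAux false d x = a ∧ delRunAux false (st d x) y = b := by
  induction l generalizing d a with
  | nil =>
    simp only [D_nil] at h
    obtain ⟨rfl, rfl⟩ := List.append_eq_nil_iff.mp h.symm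
    exact ⟨[], [], by simp, rfl, rfl⟩
  | cons c l ih =>
    rcases c with _ | _
    · rcases d with _ | _
      · -- d = false, kept false
        simp only [D_false_f] at h
        rcases a with _ | ⟨a0, a'⟩
        · exact ⟨[], false :: l, by simp, by simpa using h.symm ▸ rfl, by simpa using h⟩
        · simp at h
          obtain ⟨rfl, h2⟩ := h
          obtain ⟨x, y, rfl, hx, hy⟩ := ih false a' h2
          exact ⟨false :: x, y, by simp, by simp [hx], by simpa using hy⟩
      · -- d = true, deleted
        simp only [D_false_t] at h
        obtain ⟨x, y, rfl, hx, hy⟩ := ih false a h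
        exact ⟨false :: x, y, by simp, by simp [hx], by simpa using hy⟩
    · simp only [D_true] at h
      rcases a with _ | ⟨a0, a'⟩
      · exact ⟨[], true :: l, by simp, rfl, by simpa using h⟩
      · simp at h
        obtain ⟨rfl, h2⟩ := h
        obtain ⟨x, y, rfl, hx, hy⟩ := ih true a' h2
        exact ⟨true :: x, y, by simp, by simp [hx], by simpa using hy⟩

lemma D_head_true (l : List Bool) (d : Bool) (r : List Bool)
    (h : delRunAux false d l = true :: r) :
    ∃ l', (l = true :: l' ∨ (d = true ∧ l = false :: true :: l')) ∧
      delRunAux false true l' = r := by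
  match l, d with
  | [], _ => simp at h
  | true :: l', _ => exact ⟨l', Or.inl rfl, by simpa using h⟩
  | false :: l', false => simp at h
  | false :: [], true => simp at h
  | false :: true :: l', true => exact ⟨l', Or.inr ⟨rfl, rfl⟩, by simpa using h⟩
  | false :: false :: l', true => simp at h

lemma D_head_false (l : List Bool) (d : Bool) (r : List Bool)
    (h : delRunAux false d l = false :: r) :
    (d = false ∧ ∃ l', l = false :: l' ∧ delRunAux false false l' = r) ∨
    (d = true ∧ ∃ l', l = false :: false :: l' ∧ delRunAux false false l' = r) := by
  match l, d with
  | [], _ => simp at h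
  | true :: l', _ => simp at h
  | false :: l', false => exact Or.inl ⟨rfl, l', rfl, by simpa using h⟩
  | false :: [], true => simp at h
  | false :: true :: l', true => simp at h
  | false :: false :: l', true => exact Or.inr ⟨rfl, l', rfl, by simpa using h⟩

lemma D_count (d : Bool) (l : List Bool) :
    (delRunAux false d l).count true = l.count true := by
  induction l generalizing d with
  | nil => rfl
  | cons a l ih => cases a <;> cases d <;> simp [ih]

lemma D_length_le (d : Bool) (l : List Bool) :
    (delRunAux false d l).length ≤ l.length := by
  induction l generalizing d with
  | nil => simp
  | cons a l ih => cases a <;> cases d <;> simp [ih] <;> exact (ih false).trans (by simp) <;> omega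

lemma D_length_lt (l : List Bool) (h : false ∈ l) :
    (delRunAux false true l).length < l.length := by
  induction l with
  | nil => simp at h
  | cons a l ih =>
    cases a
    · simpa using Nat.lt_succ_of_le (D_length_le false l)
    · simp at h
      simpa using ih h

lemma D_eq_nil (l : List Bool) (h : delRunAux false false l = []) : l = [] := by
  cases l with
  | nil => rfl
  | cons a l => cases a <;> simp at h

lemma tt_infix_cons (a : Bool) (l : List Bool) (h : [true, true] <:+: l) :
    [true, true] <:+: (a :: l) := h.trans (List.suffix_cons a l).isInfix

lemma injD : ∀ (n : ℕ) (A B : List Bool), A.length ≤ n →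
    ¬[true, true] <:+: A → ¬[true, true] <:+: B →
    st false A = false → st false B = false →
    delRunAux false false A = delRunAux false false B → A = B := by
  intro n
  induction n with
  | zero =>
    intro A B hlen _ hB _ _ heq
    obtain rfl : A = [] := List.eq_nil_of_length_eq_zero (Nat.le_zero.mp hlen)
    exact (D_eq_nil B heq.symm).symm
  | succ n ih =>
    intro A B hlen hA hB hsA hsB heq
    cases A with
    | nil => exact (D_eq_nil B heq.symm).symm
    | cons a A' =>
      cases a
      · -- A = false :: A'
        simp only [D_false_f] at heq
        rcases D_head_false B false _ heq.symm with ⟨_, B', rfl, hB'⟩ | ⟨h, _⟩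
        · have := ih A' B' (by simpa using Nat.lt_succ_iff.mp (Nat.lt_of_lt_of_le (by simp) hlen))
            (fun h => hA (tt_infix_cons _ _ h)) (fun h => hB (tt_infix_cons _ _ h))
            (by simpa using hsA) (by simpa using hsB) hB'.symm
          rw [this]
        · simp at h
      · -- A = true :: A'
        simp only [D_true] at heq
        -- A' must be false :: A₃
        have hA'ne : A' ≠ [] := by
          rintro rfl
          simp [st] at hsA
        obtain ⟨a₃, A₃, rfl⟩ : ∃ b t, A' = b :: t := by
          cases A' with
          | nil => exact absurd rfl hA'ne
          | cons b t => exact ⟨b, t, rfl⟩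
        cases a₃
        case true => exact absurd ⟨[], A₃, rfl⟩ hA
        -- B = true :: false :: B₃ similarly
        obtain ⟨B', hBshape, hB'⟩ := D_head_true B false _ heq.symm
        rcases hBshape with rfl | ⟨h, _⟩
        swap
        · simp at h
        have hB'ne : B' ≠ [] := by
          rintro rfl
          simp [st] at hsB
        obtain ⟨b₃, B₃, rfl⟩ : ∃ b t, B' = b :: t := by
          cases B' with
          | nil => exact absurd rfl hB'ne
          | cons b t => exact ⟨b, t, rfl⟩
        cases b₃
        case true => exact absurd ⟨[], B₃, rfl⟩ hB
        have hd : delRunAux false false A₃ = delRunAux false false B₃ := by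
          have h1 : delRunAux false true (false :: A₃) = delRunAux false true (false :: B₃) := by
            simpa using heq
          simpa using h1
        have := ih A₃ B₃ (by simp at hlen ⊢; omega)
          (fun h => hA (tt_infix_cons _ _ (tt_infix_cons _ _ h)))
          (fun h => hB (tt_infix_cons _ _ (tt_infix_cons _ _ h)))
          (by simpa using hsA) (by simpa using hsB) hd
        rw [this]

lemma firstDiff : ∀ u v : List Bool, u.length = v.length →
    u = v ∨ ∃ p x y s t, x ≠ y ∧ u = p ++ x :: s ∧ v = p ++ y :: t ∧ s.length = t.length := by
  intro u
  induction u with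
  | nil => intro v hv; left; simp [(List.eq_nil_of_length_eq_zero hv.symm).symm]
  | cons a u' ih =>
    intro v hv
    cases v with
    | nil => simp at hv
    | cons b v' =>
      simp only [List.length_cons, Nat.add_right_cancel_iff] at hv
      by_cases hab : a = b
      · subst hab
        rcases ih v' hv with rfl | ⟨p, x, y, s, t, hxy, rfl, rfl, hst⟩
        · exact Or.inl rfl
        · exact Or.inr ⟨a :: p, x, y, s, t, hxy, rfl, rfl, hst⟩
      · exact Or.inr ⟨[], a, b, u', v', hab, rfl, rfl, hv⟩

lemma tail_infix {a : Bool} {l w : List Bool} (h : (a :: l) <:+: w) : l <:+: w :=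
  ((List.suffix_cons a l).isInfix).trans h

lemma unbal_key : ∀ (n : ℕ) (w u v : List Bool), u.length ≤ n → u <:+: w → v <:+: w →
    u.length = v.length → v.count true + 2 ≤ u.count true →
    ∃ z, (false :: (z ++ [false])) <:+: w ∧ (true :: (z ++ [true])) <:+: w := by
  intro n
  induction n with
  | zero =>
    intro w u v hn _ _ _ hc
    obtain rfl : u = [] := List.eq_nil_of_length_eq_zero (Nat.le_zero.mp hn)
    simp at hc
  | succ n ih =>
    intro w u v hn hu hv hlen hc
    cases u with
    | nil => simp at hc
    | cons a u' =>
      cases v with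
      | nil => simp at hlen
      | cons b v' =>
        simp only [List.length_cons, Nat.add_right_cancel_iff] at hlen
        have hu' : u' <:+: w := tail_infix hu
        have hv' : v' <:+: w := tail_infix hv
        match a, b with
        | true, true | false, false | false, true =>
          exact ih w u' v' (by simp at hn; omega) hu' hv' hlen (by simp at hc; omega)
        | true, false =>
          rcases firstDiff u' v' hlen with rfl | ⟨p, x, y, s, t, hxy, rfl, rfl, hst⟩
          · simp [List.count_cons] at hc
          · match x, y, hxy with
            | false, true, _ =>
              have hs : s <:+: w :=
                (List.IsSuffix.isInfix ⟨true :: p ++ [false], by simp⟩).trans hu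
              have ht : t <:+: w :=
                (List.IsSuffix.isInfix ⟨false :: p ++ [true], by simp⟩).trans hv
              refine ih w s t ?_ hs ht hst ?_
              · simp at hn; omega
              · simp [List.count_cons] at hc
                omega
            | true, false, _ =>
              refine ⟨p, ?_, ?_⟩
              · refine List.IsInfix.trans ?_ hv
                exact ⟨[], t, by simp⟩
              · refine List.IsInfix.trans ?_ hu
                exact ⟨[], s, by simp⟩

lemma balanced_iff_no_pattern (w : List Bool) :
    BalancedWord 1 w ↔
      ∀ z, ¬((false :: (z ++ [false])) <:+: w ∧ (true :: (z ++ [true])) <:+: w) := by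
  constructor
  · rintro hb z ⟨h0, h1⟩
    have hb' := hb _ _ h0 h1 (by simp)
    have h1c : (false :: (z ++ [false])).count true = z.count true := by
      simp [List.count_cons, List.count_append]
    have h2c : (true :: (z ++ [true])).count true = z.count true + 2 := by
      simp [List.count_cons, List.count_append]
    rw [h1c, h2c, abs_le] at hb'
    push_cast at hb'
    omega
  · intro h u v hu hv hlen
    by_contra hc
    rcases abs_cases ((u.count true : ℤ) - (v.count true : ℤ)) with ⟨he, _⟩ | ⟨he, _⟩ <;>
      rw [he] at hc
    · obtain ⟨z, hz⟩ := unbal_key u.length w u v le_rfl hu hv hlen (by push_cast at hc; omega)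
      exact h z hz
    · obtain ⟨z, hz⟩ := unbal_key v.length w v u le_rfl hv hu hlen.symm (by push_cast at hc; omega)
      exact h z hz

@[simp] lemma D_append_true (d : Bool) (z y : List Bool) :
    delRunAux false d (z ++ true :: y)
      = delRunAux false d z ++ true :: delRunAux false true y := by
  rw [show z ++ true :: y = z ++ ([true] ++ y) by simp, D_append]
  rfl

lemma pattern_shape {w z : List Bool} (hA : ¬[true, true] <:+: w)
    (h1 : (true :: (z ++ [true])) <:+: w) :
    z = [false] ∨ ∃ z₂, z = false :: z₂ ++ [false] := by
  cases z with
  | nil => exact absurd (by simpa using h1) hA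
  | cons a z₀ =>
    cases a
    · rcases List.eq_nil_or_concat z₀ with rfl | ⟨z₂, b, rfl⟩
      · exact Or.inl rfl
      · cases b
        · exact Or.inr ⟨z₂, by simp⟩
        · exact absurd (List.IsInfix.trans ⟨true :: false :: z₂, [], by simp⟩ h1) hA
    · exact absurd (List.IsInfix.trans ⟨[], z₀ ++ [true], by simp⟩ h1) hA

lemma one_part {w z : List Bool} (h1 : (true :: (z ++ [true])) <:+: w) :
    (true :: (delRunAux false true z ++ [true])) <:+: delRunAux false true w := by
  obtain ⟨x, y, hw⟩ := h1
  refine ⟨delRunAux false true x, delRunAux false true y, ?_⟩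
  rw [← hw]
  have h2 : x ++ (true :: (z ++ [true])) ++ y = x ++ ([true] ++ (z ++ true :: y)) := by simp
  rw [h2, D_append]
  simp

lemma zero_part {w z : List Bool} (hA : ¬[true, true] <:+: w)
    (h0 : (false :: (z ++ [false])) <:+: w) (h1 : (true :: (z ++ [true])) <:+: w) :
    (false :: (delRunAux false true z ++ [false])) <:+: delRunAux false true w := by
  obtain ⟨x, y, hw⟩ := h0
  rcases pattern_shape hA h1 with rfl | ⟨z₂, rfl⟩
  · -- z = [false] : pattern is [false,false,false], W = []
    have hw' : w = x ++ ([false] ++ ([false] ++ ([false] ++ y))) := by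
      rw [← hw]; simp
    rw [hw', D_append]
    cases hd : st true x
    · exact ⟨delRunAux false true x ++ [false], delRunAux false false y, by simp⟩
    · exact ⟨delRunAux false true x, delRunAux false false y, by simp⟩
  · -- z = false :: z₂ ++ [false]
    have hw' : w = x ++ ([false] ++ ([false] ++ (z₂ ++ ([false] ++ ([false] ++ y))))) := by
      rw [← hw]; simp
    rw [hw', D_append]
    cases hd : st true x <;> cases he : st false z₂ <;>
      simp only [List.cons_append, List.nil_append, List.singleton_append, List.append_assoc,
        D_false_t, D_false_f, D_append, he, hd, st_cons, st_nil]
    · exact ⟨delRunAux false true x ++ [false], delRunAux false false y, by simp⟩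
    · exact ⟨delRunAux false true x ++ [false], delRunAux false false y, by simp⟩
    · exact ⟨delRunAux false true x, delRunAux false false y, by simp⟩
    · exact ⟨delRunAux false true x, delRunAux false false y, by simp⟩

lemma lemmaB {w : List Bool} (hA : ¬[true, true] <:+: w)
    (hb : BalancedWord 1 (delRunAux false true w)) : BalancedWord 1 w := by
  rw [balanced_iff_no_pattern] at hb ⊢
  rintro z ⟨h0, h1⟩
  exact hb (delRunAux false true z) ⟨zero_part hA h0 h1, one_part h1⟩

lemma lift_one {w z : List Bool}
    (h : (true :: (z ++ [true])) <:+: delRunAux false true w) :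
    ∃ U1, delRunAux false true U1 = z ∧ (true :: (U1 ++ [true])) <:+: w := by
  obtain ⟨a, b, hv⟩ := h
  have hv' : delRunAux false true w = a ++ ([true] ++ (z ++ ([true] ++ b))) := by
    rw [← hv]; simp
  obtain ⟨x, y₁, rfl, hx, hy₁⟩ := D_split w true a _ hv'
  obtain ⟨y₂, hshape, hy₂⟩ := D_head_true y₁ _ _ (by simpa using hy₁)
  obtain ⟨U, y₃, rfl, hU, hy₃⟩ := D_split y₂ true z ([true] ++ b) hy₂
  obtain ⟨y₄, hsh3, _⟩ := D_head_true y₃ _ _ (by simpa using hy₃)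
  rcases hsh3 with rfl | ⟨hst, rfl⟩
  · refine ⟨U, hU, ?_⟩
    rcases hshape with rfl | ⟨_, rfl⟩
    · exact ⟨x, y₄, by simp⟩
    · exact ⟨x ++ [false], y₄, by simp⟩
  · refine ⟨U ++ [false], ?_, ?_⟩
    · rw [D_append, hU, hst]; simp
    · rcases hshape with rfl | ⟨_, rfl⟩
      · exact ⟨x, y₄, by simp⟩
      · exact ⟨x ++ [false], y₄, by simp⟩

lemma lift_zero {w z : List Bool}
    (h : (false :: (z ++ [false])) <:+: delRunAux false true w) :
    ∃ B, delRunAux false true B = z ∧ B.head? = some false ∧ st false B = false ∧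
      (false :: (B ++ [false])) <:+: w := by
  obtain ⟨a, b, hv⟩ := h
  have hv' : delRunAux false true w = a ++ ([false] ++ (z ++ ([false] ++ b))) := by
    rw [← hv]; simp
  obtain ⟨x, y₁, rfl, hx, hy₁⟩ := D_split w true a _ hv'
  have hw2 : ∃ x₀ y₂, x ++ y₁ = x₀ ++ ([false] ++ ([false] ++ y₂)) ∧
      delRunAux false false y₂ = z ++ ([false] ++ b) := by
    rcases D_head_false y₁ _ _ (by simpa using hy₁) with ⟨hd₁, y₂, rfl, hy₂⟩ | ⟨hd₁, y₂, rfl, hy₂⟩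
    · rcases st_dest true x with ⟨rfl, hst⟩ | ⟨x', hx'⟩
      · rw [hd₁] at hst; simp at hst
      · rw [hd₁] at hx'
        exact ⟨x', y₂, by rw [hx']; simp, hy₂⟩
    · exact ⟨x, y₂, by simp, hy₂⟩
  obtain ⟨x₀, y₂, hw, hy₂⟩ := hw2
  obtain ⟨U2, y₃, rfl, hU2, hy₃⟩ := D_split y₂ false z ([false] ++ b) hy₂
  rcases D_head_false y₃ _ _ (by simpa using hy₃) with ⟨he, y₄, rfl, _⟩ | ⟨he, y₄, rfl, _⟩
  · refine ⟨false :: U2, by simpa using hU2, rfl, by simpa using he, ?_⟩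
    rw [hw]
    exact ⟨x₀, y₄, by simp⟩
  · refine ⟨false :: (U2 ++ [false]), ?_, rfl, by simp, ?_⟩
    · rw [show delRunAux false true (false :: (U2 ++ [false]))
          = delRunAux false false (U2 ++ [false]) from rfl, D_append, hU2, he]
      simp
    · rw [hw]
      exact ⟨x₀, y₄, by simp⟩

lemma injD_true {A B : List Bool} (hA1 : ¬[true, true] <:+: A) (hB1 : ¬[true, true] <:+: B)
    (hA2 : A.head? = some false) (hB2 : B.head? = some false)
    (hA3 : st false A = false) (hB3 : st false B = false)
    (h : delRunAux false true A = delRunAux false true B) : A = B := by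
  cases A with
  | nil => simp at hA2
  | cons a A' =>
    cases B with
    | nil => simp at hB2
    | cons b B' =>
      simp at hA2 hB2
      subst hA2; subst hB2
      have : A' = B' := by
        refine injD A'.length A' B' le_rfl
          (fun hh => hA1 (tt_infix_cons _ _ hh)) (fun hh => hB1 (tt_infix_cons _ _ hh))
          (by simpa using hA3) (by simpa using hB3) (by simpa using h)
      rw [this]

lemma lemmaA {w : List Bool} (hA : ¬[true, true] <:+: w) (hb : BalancedWord 1 w) :
    BalancedWord 1 (delRunAux false true w) := by
  rw [balanced_iff_no_pattern] at hb ⊢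
  rintro z ⟨h0, h1⟩
  obtain ⟨U1, hU1z, hU1w⟩ := lift_one h1
  obtain ⟨B, hBz, hBhead, hBst, hBw⟩ := lift_zero h0
  -- U1 is nonempty, starts with false, ends with false
  have hU1ne : U1 ≠ [] := by
    rintro rfl
    exact hA (List.IsInfix.trans ⟨[], [], by simp⟩ hU1w)
  have hU1head : U1.head? = some false := by
    cases U1 with
    | nil => exact absurd rfl hU1ne
    | cons u0 U1' =>
      cases u0
      · rfl
      · exact absurd (List.IsInfix.trans ⟨[], U1' ++ [true], by simp⟩ hU1w) hA
  have hU1st : st false U1 = false := by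
    cases hst : st false U1
    · rfl
    · exfalso
      rcases st_dest false U1 with ⟨rfl, _⟩ | ⟨U₀, h'⟩
      · simp at hst
      · rw [hst] at h'
        exact hA (List.IsInfix.trans ⟨true :: U₀, [], by simp [h']⟩ hU1w)
  have hU1inf : ¬[true, true] <:+: U1 := fun hh =>
    hA ((hh.trans ⟨[true], [true], by simp⟩).trans hU1w)
  have hBinf : ¬[true, true] <:+: B := fun hh =>
    hA ((hh.trans ⟨[false], [false], by simp⟩).trans hBw)
  have : U1 = B := injD_true hU1inf hBinf hU1head hBhead hU1st hBst (by rw [hU1z, hBz])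
  subst this
  exact hb U1 ⟨hBw, hU1w⟩

lemma mirror_D (l : List Bool) (d : Bool) :
    delRunAux true d l = (delRunAux false d (l.map not)).map not := by
  induction l generalizing d with
  | nil => rfl
  | cons a l ih => cases a <;> cases d <;> simp [delRunAux, ih]

lemma neg_neg_id (l : List Bool) : (l.map not).map not = l := by
  induction l with
  | nil => rfl
  | cons a l ih => cases a <;> simp [ih]

lemma infix_map_not {u w : List Bool} (h : u <:+: w) : u.map not <:+: w.map not := by
  obtain ⟨s, t, rfl⟩ := h
  exact ⟨s.map not, t.map not, by simp⟩

lemma balanced_mirror {w : List Bool} (hb : BalancedWord 1 w) :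
    BalancedWord 1 (w.map not) := by
  rw [balanced_iff_no_pattern] at hb ⊢
  rintro z ⟨h0, h1⟩
  refine hb (z.map not) ⟨?_, ?_⟩
  · have := infix_map_not h1
    rw [neg_neg_id] at this
    simpa using this
  · have := infix_map_not h0
    rw [neg_neg_id] at this
    simpa using this

lemma not_tt_mirror {w : List Bool} (h : ¬[false, false] <:+: w) :
    ¬[true, true] <:+: w.map not := by
  intro hh
  have := infix_map_not hh
  rw [neg_neg_id] at this
  exact h (by simpa using this)

lemma lemmaA' {w : List Bool} (h00 : ¬[false, false] <:+: w) (hb : BalancedWord 1 w) :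
    BalancedWord 1 (delRunAux true true w) := by
  rw [mirror_D]
  exact balanced_mirror (lemmaA (not_tt_mirror h00) (balanced_mirror hb))

lemma lemmaB' {w : List Bool} (h00 : ¬[false, false] <:+: w)
    (hb : BalancedWord 1 (delRunAux true true w)) : BalancedWord 1 w := by
  have hb2 : BalancedWord 1 (delRunAux false true (w.map not)) := by
    have := balanced_mirror hb
    rwa [mirror_D, neg_neg_id] at this
  have := lemmaB (not_tt_mirror h00) hb2
  have := balanced_mirror this
  rwa [neg_neg_id] at this

lemma D'_length_lt (l : List Bool) (h : true ∈ l) :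
    (delRunAux true true l).length < l.length := by
  rw [mirror_D]
  have : false ∈ l.map not := by
    simpa using List.mem_map_of_mem (f := not) h
  simpa using D_length_lt (l.map not) this

lemma balanced_nil : BalancedWord 1 [] := by
  intro u v hu hv _
  have hu' : u = [] := by simpa using hu
  have hv' : v = [] := by simpa using hv
  simp [hu', hv']


/-- a word is 1-balanced iff a finite sequence of desubstitutions
leads from it to the empty word. -/
theorem balanced_iff_desub_to_empty (w : List Bool) :
    BalancedWord 1 w ↔ Relation.ReflTransGen Desub w [] := by
  constructor
  · have main : ∀ (n : ℕ) (w : List Bool), w.length ≤ n → BalancedWord 1 w →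
        Relation.ReflTransGen Desub w [] := by
      intro n
      induction n with
      | zero =>
        intro w hw _
        obtain rfl : w = [] := List.eq_nil_of_length_eq_zero (Nat.le_zero.mp hw)
        exact .refl
      | succ n ih =>
        intro w hw hb
        rcases eq_or_ne w [] with rfl | hne
        · exact .refl
        by_cases hcase : false ∈ w ∧ ¬[true, true] <:+: w
        · refine Relation.ReflTransGen.head (⟨hne, Or.inl ⟨hcase.2, rfl⟩⟩ : Desub w _) ?_
          refine ih _ ?_ (lemmaA hcase.2 hb)
          have := D_length_lt w hcase.1
          simp only [delRun]
          omega
        · have h00 : ¬[false, false] <:+: w := by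
            by_cases h11 : [true, true] <:+: w
            · intro h00
              exact ((balanced_iff_no_pattern w).mp hb) []
                ⟨by simpa using h00, by simpa using h11⟩
            · intro h00
              exact (not_and.mp hcase (h00.subset (by simp))) h11
          have htr : true ∈ w := by
            by_cases h11 : [true, true] <:+: w
            · exact h11.subset (by simp)
            · obtain ⟨a, ha⟩ := List.exists_mem_of_ne_nil w hne
              cases a
              · exact absurd (fun hf => (not_and.mp hcase hf) h11) (by simpa using ha)
              · exact ha
          refine Relation.ReflTransGen.head (⟨hne, Or.inr ⟨h00, rfl⟩⟩ : Desub w _) ?_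
          refine ih _ ?_ (lemmaA' h00 hb)
          have := D'_length_lt w htr
          simp only [delRun]
          omega
    exact fun hb => main w.length w le_rfl hb
  · intro h
    induction h using Relation.ReflTransGen.head_induction_on with
    | refl => exact balanced_nil
    | head hstep _ ihb =>
      obtain ⟨hne, hcase⟩ := hstep
      rcases hcase with ⟨h11, rfl⟩ | ⟨h00, rfl⟩
      · exact lemmaB h11 ihb
      · exact lemmaB' h00 ihb
end

section
/- The number of 1-balanced binary words of length n equals 1 + Σ_{i=1}^{n} (n − i + 1)·φ(i) = 1 + Σ_{i=1}^{n} Σ_{j=1}^{i} φ(j), where φ is Euler's totient function. -/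
namespace BalCount

/-- number of `true`s among the first `i` letters -/
def cnt (w : List Bool) (i : ℕ) : ℕ := (w.take i).count true

lemma cnt_zero (w : List Bool) : cnt w 0 = 0 := rfl

lemma cnt_add (w : List Bool) (i ℓ : ℕ) :
    cnt w (i + ℓ) = cnt w i + ((w.drop i).take ℓ).count true := by
  unfold cnt; rw [List.take_add, List.count_append]

lemma cnt_mono (w : List Bool) {i j : ℕ} (h : i ≤ j) : cnt w i ≤ cnt w j := by
  obtain ⟨ℓ, rfl⟩ := Nat.exists_eq_add_of_le h
  rw [cnt_add]; omega

lemma cnt_succ_le (w : List Bool) (i : ℕ) : cnt w (i + 1) ≤ cnt w i + 1 := by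
  rw [cnt_add]
  have h1 : ((w.drop i).take 1).count true ≤ ((w.drop i).take 1).length :=
    List.count_le_length
  have h2 : ((w.drop i).take 1).length ≤ 1 := by
    rw [List.length_take]; omega
  omega

lemma cnt_stable (w : List Bool) {i : ℕ} (h : w.length ≤ i) :
    cnt w i = cnt w w.length := by
  unfold cnt; rw [List.take_of_length_le h, List.take_length]

lemma exists_window {w u : List Bool} (h : u <:+: w) :
    ∃ i, i + u.length ≤ w.length ∧ cnt w (i + u.length) = cnt w i + u.count true := by
  obtain ⟨s, t, rfl⟩ := h
  have h1 : (s ++ u ++ t).take s.length = s := by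
    rw [List.append_assoc]; exact List.take_left
  have h2 : (s ++ u ++ t).take (s.length + u.length) = s ++ u := by
    rw [show s.length + u.length = (s ++ u).length by simp]
    exact List.take_left
  refine ⟨s.length, by simp, ?_⟩
  unfold cnt
  rw [h1, h2, List.count_append]

lemma window_infix (w : List Bool) {i ℓ : ℕ} (h : i + ℓ ≤ w.length) :
    ∃ u, u <:+: w ∧ u.length = ℓ ∧ cnt w (i + ℓ) = cnt w i + u.count true := by
  refine ⟨(w.drop i).take ℓ, ?_, ?_, cnt_add w i ℓ⟩
  · exact (List.take_prefix ℓ (w.drop i)).isInfix.trans (List.drop_suffix i w).isInfix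
  · rw [List.length_take, List.length_drop]; omega

/-- balance condition expressed via the counting function -/
def BalF (f : ℕ → ℕ) (n : ℕ) : Prop :=
  ∀ i j ℓ, i + ℓ ≤ n → j + ℓ ≤ n → f (i + ℓ) + f j ≤ f (j + ℓ) + f i + 1

lemma bal_iff (w : List Bool) : BalancedWord 1 w ↔ BalF (cnt w) w.length := by
  constructor
  · intro hb i j ℓ hi hj
    obtain ⟨u, hu, hul, hue⟩ := window_infix w hi
    obtain ⟨v, hv, hvl, hve⟩ := window_infix w hj
    have habs := hb u v hu hv (hul.trans hvl.symm)
    rw [abs_le] at habs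
    have h1 : (u.count true : ℤ) - v.count true ≤ 1 := habs.2
    have h2 : u.count true ≤ v.count true + 1 := by
      have h3 : (u.count true : ℤ) ≤ (v.count true : ℤ) + 1 := by linarith
      exact_mod_cast h3
    omega
  · intro hb u v hu hv hl
    obtain ⟨i, hi, hie⟩ := exists_window hu
    obtain ⟨j, hj, hje⟩ := exists_window hv
    rw [hl] at hi hie
    have h1 := hb i j v.length hi hj
    have h2 := hb j i v.length hj hi
    rw [abs_le]
    constructor
    · have : v.count true ≤ u.count true + 1 := by omega
      push_cast; linarith
    · have : u.count true ≤ v.count true + 1 := by omega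
      push_cast; linarith

lemma bal_infix {w u : List Bool} (h : BalancedWord 1 w) (hin : u <:+: w) :
    BalancedWord 1 u :=
  fun u' v' hu' hv' hl => h u' v' (hu'.trans hin) (hv'.trans hin) hl

lemma bal_nil : BalancedWord 1 ([] : List Bool) := by
  intro u v hu hv _
  rw [List.infix_nil] at hu hv
  subst hu; subst hv; simp

lemma bal_rev {w : List Bool} (h : BalancedWord 1 w) : BalancedWord 1 w.reverse := by
  intro u v hu hv hl
  have hu' : u.reverse <:+: w := by
    rw [← List.reverse_infix]; simpa using hu
  have hv' : v.reverse <:+: w := by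
    rw [← List.reverse_infix]; simpa using hv
  have := h u.reverse v.reverse hu' hv' (by simpa using hl)
  simpa [List.count_reverse] using this

end BalCount

section X
open BalCount

lemma cnt_append_le (w : List Bool) (b : Bool) {i : ℕ} (h : i ≤ w.length) :
    cnt (w ++ [b]) i = cnt w i := by
  unfold cnt; rw [List.take_append_of_le_length h]

lemma cnt_append_top (w : List Bool) (b : Bool) {i : ℕ} (h : w.length < i) :
    cnt (w ++ [b]) i = cnt w w.length + b.toNat := by
  unfold cnt
  rw [List.take_of_length_le (by simp; omega), List.take_length, List.count_append]
  cases b <;> simp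

lemma extract0 {w : List Bool} (hb : BalF (cnt w) w.length)
    (h0 : ¬ BalF (cnt (w ++ [false])) (w.length + 1)) :
    ∃ a c m, 1 ≤ m ∧ a + m = w.length + 1 ∧ c + m ≤ w.length ∧
      cnt w w.length + cnt w c + 2 ≤ cnt w (c + m) + cnt w a := by
  set n := w.length with hn
  unfold BalF at h0
  push_neg at h0
  obtain ⟨i, j, ℓ, hi, hj, hlt⟩ := h0
  have hG : ∀ k, k ≤ n → cnt (w ++ [false]) k = cnt w k := fun k hk => cnt_append_le w false hk
  have hGn : cnt (w ++ [false]) (n + 1) = cnt w n := by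
    rw [cnt_append_top w false (by omega)]; simp [hn]
  rcases Nat.eq_zero_or_pos ℓ with rfl | hℓ
  · simp at hlt; omega
  rcases Nat.lt_or_ge (i + ℓ) (n + 1) with hin | hin
  · rcases Nat.lt_or_ge (j + ℓ) (n + 1) with hjn | hjn
    · -- both inside w : contradicts hb
      rw [hG (i + ℓ) (by omega), hG (j + ℓ) (by omega), hG i (by omega), hG j (by omega)] at hlt
      have := hb i j ℓ (by omega) (by omega)
      omega
    · -- j + ℓ = n+1 : the real case
      have hje : j + ℓ = n + 1 := by omega
      rw [hje, hGn, hG (i + ℓ) (by omega), hG i (by omega), hG j (by omega)] at hlt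
      exact ⟨j, i, ℓ, hℓ, hje, by omega, by omega⟩
  · have hie : i + ℓ = n + 1 := by omega
    rcases Nat.lt_or_ge (j + ℓ) (n + 1) with hjn | hjn
    · -- i + ℓ = n+1, suffix is the big window : impossible
      exfalso
      rw [hie, hGn, hG (j + ℓ) (by omega), hG i (by omega), hG j (by omega)] at hlt
      obtain ⟨m, rfl⟩ : ∃ m, ℓ = m + 1 := ⟨ℓ - 1, by omega⟩
      rw [← Nat.add_assoc] at hlt
      have h1 := hb i j m (by omega) (by omega)
      have h2 : cnt w (j + m) ≤ cnt w (j + m + 1) := cnt_mono w (by omega)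
      have h3 : i + m = n := by omega
      rw [h3] at h1
      omega
    · have hje : j + ℓ = n + 1 := by omega
      have : i = j := by omega
      subst this
      omega

lemma extract1 {w : List Bool} (hb : BalF (cnt w) w.length)
    (h1 : ¬ BalF (cnt (w ++ [true])) (w.length + 1)) :
    ∃ a c m, 1 ≤ m ∧ a + m = w.length + 1 ∧ c + m ≤ w.length ∧
      cnt w (c + m) + cnt w a + 1 ≤ cnt w w.length + cnt w c := by
  set n := w.length with hn
  unfold BalF at h1
  push_neg at h1
  obtain ⟨i, j, ℓ, hi, hj, hlt⟩ := h1
  have hG : ∀ k, k ≤ n → cnt (w ++ [true]) k = cnt w k := fun k hk => cnt_append_le w true hk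
  have hGn : cnt (w ++ [true]) (n + 1) = cnt w n + 1 := by
    rw [cnt_append_top w true (by omega)]; simp [hn]
  rcases Nat.eq_zero_or_pos ℓ with rfl | hℓ
  · simp at hlt; omega
  rcases Nat.lt_or_ge (i + ℓ) (n + 1) with hin | hin
  · rcases Nat.lt_or_ge (j + ℓ) (n + 1) with hjn | hjn
    · rw [hG (i + ℓ) (by omega), hG (j + ℓ) (by omega), hG i (by omega), hG j (by omega)] at hlt
      have := hb i j ℓ (by omega) (by omega)
      omega
    · -- j + ℓ = n+1, suffix is the small window : impossible
      exfalso
      have hje : j + ℓ = n + 1 := by omega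
      rw [hje, hGn, hG (i + ℓ) (by omega), hG i (by omega), hG j (by omega)] at hlt
      obtain ⟨m, rfl⟩ : ∃ m, ℓ = m + 1 := ⟨ℓ - 1, by omega⟩
      rw [← Nat.add_assoc] at hlt
      have hbb := hb i j m (by omega) (by omega)
      have h2 : cnt w (i + m + 1) ≤ cnt w (i + m) + 1 := cnt_succ_le w (i + m)
      have h3 : j + m = n := by omega
      rw [h3] at hbb
      omega
  · have hie : i + ℓ = n + 1 := by omega
    rcases Nat.lt_or_ge (j + ℓ) (n + 1) with hjn | hjn
    · rw [hie, hGn, hG (j + ℓ) (by omega), hG i (by omega), hG j (by omega)] at hlt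
      exact ⟨i, j, ℓ, hℓ, hie, by omega, by omega⟩
    · have : i = j := by omega
      subst this
      omega

lemma extend_right {w : List Bool} (hw : BalancedWord 1 w) :
    BalancedWord 1 (w ++ [false]) ∨ BalancedWord 1 (w ++ [true]) := by
  by_contra hc
  push_neg at hc
  obtain ⟨h0, h1⟩ := hc
  set n := w.length with hn
  have hb : BalF (cnt w) n := (bal_iff w).mp hw
  rw [bal_iff] at h0 h1
  simp only [List.length_append, List.length_singleton] at h0 h1
  obtain ⟨a, c, m, hm1, ham, hcm, hC0⟩ := extract0 hb h0
  obtain ⟨a', c', m', hm1', ham', hcm', hC1⟩ := extract1 hb h1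
  rcases le_or_gt m m' with hle | hlt
  · -- m ≤ m', d = m' - m = a - a'
    have h_low := hb a' c' (m' - m) (by omega) (by omega)
    have e1 : a' + (m' - m) = a := by omega
    rw [e1] at h_low
    have h_mid := hb c (c' + (m' - m)) m (by omega) (by omega)
    have e2 : c' + (m' - m) + m = c' + m' := by omega
    rw [e2] at h_mid
    omega
  · -- m' < m, d = m - m' = a' - a
    have h_low := hb c a (m - m') (by omega) (by omega)
    have e1 : a + (m - m') = a' := by omega
    rw [e1] at h_low
    have h_mid := hb (c + (m - m')) c' m' (by omega) (by omega)
    have e2 : c + (m - m') + m' = c + m := by omega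
    rw [e2] at h_mid
    omega

end X

namespace BalCount

/-- quasi-additivity of the count function -/
def QF (g : ℕ → ℕ) (N : ℕ) : Prop :=
  ∀ a b, 1 ≤ a → 1 ≤ b → a + b ≤ N → g a + g b ≤ g (a + b) ∧ g (a + b) ≤ g a + g b + 1

lemma cnt_cons (b : Bool) (w : List Bool) (i : ℕ) :
    cnt (b :: w) (i + 1) = b.toNat + cnt w i := by
  unfold cnt
  rw [List.take_succ_cons]
  cases b <;> simp [List.count_cons] <;> omega

lemma LS_iff {w : List Bool} :
    (BalancedWord 1 (false :: w) ∧ BalancedWord 1 (true :: w)) ↔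
      QF (fun k => cnt w (k - 1)) (w.length + 1) := by
  rw [bal_iff, bal_iff]
  simp only [List.length_cons]
  set g : ℕ → ℕ := fun k => cnt w (k - 1) with hg
  have hG0 : ∀ k, cnt (false :: w) k = g k := by
    intro k
    cases k with
    | zero => rfl
    | succ k => rw [cnt_cons]; simp [hg]
  have hG1 : ∀ k, 1 ≤ k → cnt (true :: w) k = g k + 1 := by
    intro k hk
    obtain ⟨k, rfl⟩ : ∃ m, k = m + 1 := ⟨k - 1, by omega⟩
    rw [cnt_cons]; simp [hg]; omega
  have hG10 : cnt (true :: w) 0 = 0 := rfl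
  have hg0 : g 0 = 0 := rfl
  have hg1 : g 1 = 0 := rfl
  constructor
  · rintro ⟨H0, H1⟩ a b ha hb hab
    have e1 := H0 a 0 b (by omega) (by omega)
    rw [Nat.zero_add] at e1
    rw [hG0, hG0, hG0, hG0] at e1
    have e2 := H1 0 a b (by omega) (by omega)
    rw [Nat.zero_add] at e2
    rw [hG1 b (by omega), hG1 a (by omega), hG1 (a + b) (by omega), hG10] at e2
    omega
  · intro hQ
    constructor
    · intro i j ℓ hi hj
      rw [hG0, hG0, hG0, hG0]
      rcases Nat.eq_zero_or_pos ℓ with rfl | hℓ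
      · simp only [Nat.add_zero]; omega
      rcases Nat.eq_zero_or_pos i with rfl | hi1
      · rcases Nat.eq_zero_or_pos j with rfl | hj1
        · omega
        · simp only [Nat.zero_add]
          have := (hQ j ℓ hj1 hℓ (by omega)).1
          omega
      · rcases Nat.eq_zero_or_pos j with rfl | hj1
        · simp only [Nat.zero_add]
          have := (hQ i ℓ hi1 hℓ (by omega)).2
          omega
        · have e1 := (hQ i ℓ hi1 hℓ (by omega)).2
          have e2 := (hQ j ℓ hj1 hℓ (by omega)).1
          omega
    · intro i j ℓ hi hj
      rcases Nat.eq_zero_or_pos ℓ with rfl | hℓ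
      · simp only [Nat.add_zero]; omega
      rcases Nat.eq_zero_or_pos i with rfl | hi1
      · rcases Nat.eq_zero_or_pos j with rfl | hj1
        · omega
        · simp only [Nat.zero_add]
          rw [hG1 ℓ (by omega), hG1 j (by omega), hG1 (j + ℓ) (by omega), hG10]
          have := (hQ j ℓ hj1 hℓ (by omega)).1
          omega
      · rcases Nat.eq_zero_or_pos j with rfl | hj1
        · simp only [Nat.zero_add]
          rw [hG1 ℓ (by omega), hG1 i (by omega), hG1 (i + ℓ) (by omega), hG10]
          have := (hQ i ℓ hi1 hℓ (by omega)).2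
          omega
        · rw [hG1 (i + ℓ) (by omega), hG1 i (by omega), hG1 (j + ℓ) (by omega), hG1 j (by omega)]
          have e1 := (hQ i ℓ hi1 hℓ (by omega)).2
          have e2 := (hQ j ℓ hj1 hℓ (by omega)).1
          omega

end BalCount

namespace BalCount

lemma div_add_le (x y q : ℕ) (hq : 0 < q) : x / q + y / q ≤ (x + y) / q := by
  rw [Nat.le_div_iff_mul_le hq, Nat.add_mul]
  exact Nat.add_le_add (Nat.div_mul_le_self x q) (Nat.div_mul_le_self y q)

lemma le_div_add (x y q : ℕ) (hq : 0 < q) : (x + y) / q ≤ x / q + y / q + 1 := by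
  have h : (x + y) / q < x / q + y / q + 2 := by
    rw [Nat.div_lt_iff_lt_mul hq]
    have hx := Nat.div_add_mod x q
    have hy := Nat.div_add_mod y q
    have hmx : x % q < q := Nat.mod_lt _ hq
    have hmy : y % q < q := Nat.mod_lt _ hq
    nlinarith
  omega

lemma QF_floor (p q N : ℕ) (hq : 0 < q) : QF (fun k => k * p / q) N := by
  intro a b _ _ _
  constructor
  · have := div_add_le (a * p) (b * p) q hq
    rwa [← Nat.add_mul] at this
  · have := le_div_add (a * p) (b * p) q hq
    rwa [← Nat.add_mul] at this

lemma cnt_succ (w : List Bool) (i : ℕ) (h : i < w.length) :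
    cnt w (i + 1) = cnt w i + (w[i]).toNat := by
  unfold cnt
  rw [← List.take_concat_get h, List.concat_eq_append, List.count_append]
  cases hw : w[i] <;> simp [hw]

/-- the mechanical word of slope p/q and length n -/
def FW (n p q : ℕ) : List Bool :=
  (List.range n).map (fun j => decide ((j + 1) * p / q < (j + 2) * p / q))

lemma length_FW (n p q : ℕ) : (FW n p q).length = n := by simp [FW]

lemma getElem_FW (n p q j : ℕ) (h : j < n) :
    (FW n p q)[j]'(by rw [length_FW]; exact h) =
      decide ((j + 1) * p / q < (j + 2) * p / q) := by
  simp [FW]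

lemma div_step (p q x : ℕ) (hpq : p < q) :
    x * p / q ≤ (x + 1) * p / q ∧ (x + 1) * p / q ≤ x * p / q + 1 := by
  have hq : 0 < q := by omega
  constructor
  · exact Nat.div_le_div_right (Nat.mul_le_mul_right p (by omega))
  · have := le_div_add (x * p) p q hq
    rw [show x * p + p = (x + 1) * p by ring] at this
    have hp0 : p / q = 0 := Nat.div_eq_of_lt hpq
    omega

lemma cnt_FW {n p q : ℕ} (hpq : p < q) {m : ℕ} (hm : m ≤ n) :
    cnt (FW n p q) m = (m + 1) * p / q := by
  induction m with
  | zero =>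
    rw [cnt_zero]
    rw [Nat.one_mul]
    exact (Nat.div_eq_of_lt hpq).symm
  | succ m ih =>
    have hm' : m ≤ n := by omega
    rw [cnt_succ _ m (by rw [length_FW]; omega), ih hm', getElem_FW n p q m (by omega)]
    have hs := div_step p q (m + 1) hpq
    rcases Nat.lt_or_ge ((m + 1) * p / q) ((m + 1 + 1) * p / q) with hlt | hge
    · simp only [show m + 1 + 1 = m + 2 from rfl] at *
      rw [decide_eq_true hlt]
      simp only [Bool.toNat_true]
      omega
    · have heq : (m + 1 + 1) * p / q = (m + 1) * p / q := by omega
      simp only [show m + 1 + 1 = m + 2 from rfl] at *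
      rw [decide_eq_false (by omega)]
      simp only [Bool.toNat_false]
      omega

lemma QF_sub_one {g : ℕ → ℕ} {N : ℕ} (hQ : QF g N) (h1 : g 1 = 0) :
    ∀ k, 1 ≤ k → k ≤ N → g k + 1 ≤ k := by
  intro k
  induction k with
  | zero => omega
  | succ k ih =>
    intro _ hk
    rcases Nat.eq_zero_or_pos k with rfl | hk1
    · simp only [Nat.zero_add]; omega
    · have := (hQ k 1 hk1 le_rfl (by omega)).2
      have := ih hk1 (by omega)
      omega

lemma QF_descent {g : ℕ → ℕ} {N : ℕ} (hQ : QF g N) :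
    ∀ s j k, 1 ≤ j → 1 ≤ k → j ≤ N → k ≤ N → j + k ≤ s →
      j * (g k + 1) ≤ k * g j → False := by
  intro s
  induction s with
  | zero => intro j k hj hk _ _ hs _; omega
  | succ s ih =>
    intro j k hj hk hjN hkN hs hineq
    rcases lt_trichotomy j k with h | h | h
    · obtain ⟨d, rfl⟩ : ∃ d, k = j + d := ⟨k - j, by omega⟩
      have hd : 1 ≤ d := by omega
      have hq1 := (hQ j d hj hd (by omega)).1
      apply ih j d hj hd hjN (by omega) (by omega)
      have h2 : j * (g j + g d) ≤ j * g (j + d) := Nat.mul_le_mul_left j hq1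
      nlinarith
    · subst h
      nlinarith
    · obtain ⟨d, rfl⟩ : ∃ d, j = k + d := ⟨j - k, by omega⟩
      have hd : 1 ≤ d := by omega
      have hq2 := (hQ k d hk hd (by omega)).2
      apply ih d k hd hk (by omega) hkN (by omega)
      have h2 : k * g (k + d) ≤ k * (g k + g d + 1) := Nat.mul_le_mul_left k hq2
      nlinarith

lemma exists_argmax (g : ℕ → ℕ) (N : ℕ) :
    ∃ q, 1 ≤ q ∧ q ≤ N + 1 ∧ ∀ k, 1 ≤ k → k ≤ N + 1 → g k * q ≤ g q * k := by
  obtain ⟨q, hq, hmax⟩ :=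
    Finset.exists_max_image (Finset.Icc 1 (N + 1)) (fun k => (g k : ℚ) / k) ⟨1, by simp⟩
  rw [Finset.mem_Icc] at hq
  refine ⟨q, hq.1, hq.2, ?_⟩
  intro k hk1 hk2
  have h := hmax k (Finset.mem_Icc.mpr ⟨hk1, hk2⟩)
  have hk0 : (0 : ℚ) < (k : ℚ) := by exact_mod_cast (by omega : 0 < k)
  have hq0 : (0 : ℚ) < (q : ℚ) := by exact_mod_cast (by omega : 0 < q)
  rw [div_le_div_iff₀ hk0 hq0] at h
  exact_mod_cast h

lemma QF_floor_form {g : ℕ → ℕ} {n : ℕ} (hQ : QF g (n + 1)) (h1 : g 1 = 0) :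
    ∃ p q, p < q ∧ q ≤ n + 1 ∧ Nat.gcd p q = 1 ∧
      ∀ k, 1 ≤ k → k ≤ n + 1 → g k = k * p / q := by
  obtain ⟨q0, hq01, hq0N, hmax⟩ := exists_argmax g n
  set p0 := g q0 with hp0def
  have key : ∀ k, 1 ≤ k → k ≤ n + 1 → g k = k * p0 / q0 := by
    intro k hk1 hkN
    have hlow : g k ≤ k * p0 / q0 := by
      rw [Nat.le_div_iff_mul_le (by omega)]
      have := hmax k hk1 hkN
      calc g k * q0 ≤ p0 * k := this
        _ = k * p0 := Nat.mul_comm _ _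
    have hup : k * p0 / q0 ≤ g k := by
      have hlt : k * p0 / q0 < g k + 1 := by
        rw [Nat.div_lt_iff_lt_mul (by omega)]
        by_contra hcon
        push_neg at hcon
        apply QF_descent hQ (q0 + k) q0 k hq01 hk1 hq0N hkN le_rfl
        calc q0 * (g k + 1) = (g k + 1) * q0 := Nat.mul_comm _ _
          _ ≤ k * p0 := hcon
          _ = k * g q0 := rfl
      omega
    omega
  have hp0 : p0 < q0 := by
    have := QF_sub_one hQ h1 q0 hq01 hq0N
    omega
  set d := Nat.gcd p0 q0 with hd
  have hdq : d ∣ q0 := Nat.gcd_dvd_right p0 q0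
  have hdp : d ∣ p0 := Nat.gcd_dvd_left p0 q0
  have hdpos : 0 < d := Nat.gcd_pos_of_pos_right _ (by omega)
  refine ⟨p0 / d, q0 / d, ?_, ?_, ?_, ?_⟩
  · exact Nat.div_lt_div_of_lt_of_dvd hdq hp0
  · exact le_trans (Nat.div_le_self _ _) hq0N
  · exact Nat.coprime_div_gcd_div_gcd hdpos
  · intro k hk1 hkN
    rw [key k hk1 hkN]
    obtain ⟨p', hp'⟩ := hdp
    obtain ⟨q', hq'⟩ := hdq
    rw [hp', hq', Nat.mul_div_cancel_left p' hdpos, Nat.mul_div_cancel_left q' hdpos,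
      show k * (d * p') = d * (k * p') by ring, Nat.mul_div_mul_left _ _ hdpos]

lemma eq_FW_of_cnt {w : List Bool} {n p q : ℕ} (hlen : w.length = n) (hpq : p < q)
    (hcnt : ∀ m, m ≤ n → cnt w m = (m + 1) * p / q) : w = FW n p q := by
  apply List.ext_getElem (by rw [length_FW, hlen])
  intro j hj hj2
  rw [length_FW] at hj2
  have hjw : j < w.length := by omega
  have hstep : cnt w (j + 1) = cnt w j + (w[j]).toNat := cnt_succ w j hjw
  have h1 : cnt w j = (j + 1) * p / q := hcnt j (by omega)
  have h2 : cnt w (j + 1) = (j + 1 + 1) * p / q := hcnt (j + 1) (by omega)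
  rw [getElem_FW n p q j (by omega)]
  have h3 : (j + 1 + 1) = j + 2 := rfl
  rw [h3] at h2
  cases hw : w[j] with
  | false =>
    rw [hw] at hstep
    simp only [Bool.toNat_false, Nat.add_zero] at hstep
    symm
    rw [decide_eq_false_iff_not]
    omega
  | true =>
    rw [hw] at hstep
    simp only [Bool.toNat_true] at hstep
    symm
    rw [decide_eq_true_iff]
    omega

lemma FW_inj {n p q p' q' : ℕ} (hpq : p < q) (hq : q ≤ n + 1) (hg : Nat.gcd p q = 1)
    (hpq' : p' < q') (hq' : q' ≤ n + 1) (hg' : Nat.gcd p' q' = 1)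
    (heq : FW n p q = FW n p' q') : p = p' ∧ q = q' := by
  have hc : ∀ k, 1 ≤ k → k ≤ n + 1 → k * p / q = k * p' / q' := by
    intro k hk1 hk2
    have e1 : cnt (FW n p q) (k - 1) = (k - 1 + 1) * p / q := cnt_FW hpq (by omega)
    have e2 : cnt (FW n p' q') (k - 1) = (k - 1 + 1) * p' / q' := cnt_FW hpq' (by omega)
    rw [heq] at e1
    rw [e1, show k - 1 + 1 = k by omega] at e2
    exact e2
  have hq0 : 0 < q := by omega
  have hq0' : 0 < q' := by omega
  have hcross : p * q' = p' * q := by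
    rcases lt_trichotomy (p * q') (p' * q) with h | h | h
    · exfalso
      have e := hc q' (by omega) hq'
      have e1 : q' * p' / q' = p' := by
        rw [Nat.mul_comm]
        exact Nat.mul_div_cancel p' hq0'
      have e2 : q' * p / q < p' := by
        rw [Nat.div_lt_iff_lt_mul hq0]
        calc q' * p = p * q' := Nat.mul_comm _ _
          _ < p' * q := h
      omega
    · exact h
    · exfalso
      have e := hc q (by omega) hq
      have e1 : q * p / q = p := by
        rw [Nat.mul_comm]
        exact Nat.mul_div_cancel p hq0
      have e2 : q * p' / q' < p := by
        rw [Nat.div_lt_iff_lt_mul hq0']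
        calc q * p' = p' * q := Nat.mul_comm _ _
          _ < p * q' := h
      omega
  have hqq' : q ∣ q' := by
    have hdvd : q ∣ p * q' := ⟨p', by rw [hcross]; ring⟩
    exact Nat.Coprime.dvd_of_dvd_mul_left (Nat.Coprime.symm hg) hdvd
  have hq'q : q' ∣ q := by
    have hdvd : q' ∣ p' * q := ⟨p, by rw [← hcross]; ring⟩
    exact Nat.Coprime.dvd_of_dvd_mul_left (Nat.Coprime.symm hg') hdvd
  have hqe : q = q' := Nat.dvd_antisymm hqq' hq'q
  subst hqe
  refine ⟨?_, rfl⟩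
  exact Nat.eq_of_mul_eq_mul_right hq0 hcross

end BalCount

namespace BalCount

def LSet (n : ℕ) : Set (List Bool) :=
  {w | (BalancedWord 1 (false :: w) ∧ BalancedWord 1 (true :: w)) ∧ w.length = n}

def RSet (n : ℕ) : Set (List Bool) :=
  {w | (BalancedWord 1 (w ++ [false]) ∧ BalancedWord 1 (w ++ [true])) ∧ w.length = n}

def Sset (n : ℕ) : Set (List Bool) := {w | BalancedWord 1 w ∧ w.length = n}

def FareyF (n : ℕ) : Finset (ℕ × ℕ) :=
  (Finset.Icc 1 (n + 1)).biUnion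
    (fun q => ((Finset.range q).filter q.Coprime).image (fun p => (p, q)))

lemma mem_FareyF {n : ℕ} {pq : ℕ × ℕ} :
    pq ∈ FareyF n ↔ 1 ≤ pq.2 ∧ pq.2 ≤ n + 1 ∧ pq.1 < pq.2 ∧ Nat.gcd pq.1 pq.2 = 1 := by
  obtain ⟨p, q⟩ := pq
  constructor
  · intro h
    obtain ⟨q', hq', hmem⟩ := Finset.mem_biUnion.mp h
    obtain ⟨p', hp', heq⟩ := Finset.mem_image.mp hmem
    obtain ⟨hpr, hco⟩ := Finset.mem_filter.mp hp'
    have he1 : p' = p := congrArg Prod.fst heq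
    have he2 : q' = q := congrArg Prod.snd heq
    subst he1; subst he2
    rw [Finset.mem_Icc] at hq'
    exact ⟨hq'.1, hq'.2, Finset.mem_range.mp hpr, Nat.Coprime.symm hco⟩
  · rintro ⟨h1, h2, h3, h4⟩
    exact Finset.mem_biUnion.mpr ⟨q, Finset.mem_Icc.mpr ⟨h1, h2⟩,
      Finset.mem_image.mpr ⟨p, Finset.mem_filter.mpr
        ⟨Finset.mem_range.mpr h3, Nat.Coprime.symm h4⟩, rfl⟩⟩

lemma card_FareyF (n : ℕ) :
    (FareyF n).card = ∑ q ∈ Finset.Icc 1 (n + 1), Nat.totient q := by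
  rw [FareyF, Finset.card_biUnion]
  · apply Finset.sum_congr rfl
    intro q _
    rw [Finset.card_image_of_injective _ (fun a b hab => by simpa using congrArg Prod.fst hab)]
    exact (Nat.totient_eq_card_coprime q).symm
  · intro x _ y _ hxy
    apply Finset.disjoint_left.mpr
    rintro a ha hb
    obtain ⟨p1, _, h1⟩ := Finset.mem_image.mp ha
    obtain ⟨p2, _, h2⟩ := Finset.mem_image.mp hb
    apply hxy
    have e1 : a.2 = x := by rw [← h1]
    have e2 : a.2 = y := by rw [← h2]
    rw [← e1, e2]

lemma LSet_eq (n : ℕ) :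
    LSet n = (fun pq : ℕ × ℕ => FW n pq.1 pq.2) '' ↑(FareyF n) := by
  ext w
  constructor
  · rintro ⟨⟨H0, H1⟩, hlen⟩
    have hQ : QF (fun k => cnt w (k - 1)) (w.length + 1) := LS_iff.mp ⟨H0, H1⟩
    rw [hlen] at hQ
    obtain ⟨p, q, hpq, hqN, hgcd, hk⟩ := QF_floor_form hQ rfl
    refine ⟨(p, q), ?_, ?_⟩
    · rw [Finset.mem_coe, mem_FareyF]
      exact ⟨by omega, hqN, hpq, hgcd⟩
    · have hcnt : ∀ m, m ≤ n → cnt w m = (m + 1) * p / q := by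
        intro m hm
        have h := hk (m + 1) (by omega) (by omega)
        simpa using h
      exact (eq_FW_of_cnt hlen hpq hcnt).symm
  · rintro ⟨⟨p, q⟩, hmem, rfl⟩
    rw [Finset.mem_coe, mem_FareyF] at hmem
    obtain ⟨hq1, hqN, hpq, hgcd⟩ := hmem
    refine ⟨?_, length_FW n p q⟩
    apply LS_iff.mpr
    rw [length_FW]
    intro a b ha hb hab
    have e : ∀ k, 1 ≤ k → k ≤ n + 1 → cnt (FW n p q) (k - 1) = k * p / q := by
      intro k h1 h2
      rw [cnt_FW hpq (show k - 1 ≤ n by omega), show k - 1 + 1 = k by omega]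
    simp only []
    rw [e a ha (by omega), e b hb (by omega), e (a + b) (by omega) hab]
    exact QF_floor p q (n + 1) (by omega) a b ha hb hab

lemma ncard_LSet (n : ℕ) :
    (LSet n).ncard = ∑ q ∈ Finset.Icc 1 (n + 1), Nat.totient q := by
  rw [LSet_eq, Set.ncard_image_of_injOn, Set.ncard_coe_finset, card_FareyF]
  intro x hx y hy hxy
  rw [Finset.mem_coe, mem_FareyF] at hx hy
  have h := FW_inj hx.2.2.1 hx.2.1 hx.2.2.2 hy.2.2.1 hy.2.1 hy.2.2.2 hxy
  exact Prod.ext h.1 h.2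

lemma RSet_image (n : ℕ) : List.reverse '' RSet n = LSet n := by
  ext v
  constructor
  · rintro ⟨w, ⟨⟨h0, h1⟩, hlen⟩, rfl⟩
    refine ⟨⟨?_, ?_⟩, by simpa using hlen⟩
    · have h := bal_rev h0
      simp only [List.reverse_append, List.reverse_singleton, List.singleton_append] at h
      exact h
    · have h := bal_rev h1
      simp only [List.reverse_append, List.reverse_singleton, List.singleton_append] at h
      exact h
  · rintro ⟨⟨h0, h1⟩, hlen⟩
    refine ⟨v.reverse, ⟨⟨?_, ?_⟩, by simpa using hlen⟩, by simp⟩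
    · have h := bal_rev h0
      simp only [List.reverse_cons] at h
      exact h
    · have h := bal_rev h1
      simp only [List.reverse_cons] at h
      exact h

lemma ncard_RSet (n : ℕ) : (RSet n).ncard = (LSet n).ncard := by
  rw [← RSet_image, Set.ncard_image_of_injective _ List.reverse_injective]

lemma finite_part (P : List Bool → Prop) (n : ℕ) (h : ∀ w, P w → w.length = n) :
    {w : List Bool | P w}.Finite :=
  (List.finite_length_eq Bool n).subset (fun w hw => h w hw)

lemma step (n : ℕ) : (Sset (n + 1)).ncard = (Sset n).ncard + (RSet n).ncard := by
  classical
  set A : Set (List Bool) :=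
    {w | (BalancedWord 1 w ∧ w.length = n) ∧ BalancedWord 1 (w ++ [false])} with hA
  set B : Set (List Bool) :=
    {w | (BalancedWord 1 w ∧ w.length = n) ∧ BalancedWord 1 (w ++ [true])} with hB
  have finA : A.Finite := finite_part _ n (fun w hw => hw.1.2)
  have finB : B.Finite := finite_part _ n (fun w hw => hw.1.2)
  have injF : Function.Injective (fun w : List Bool => w ++ [false]) := by
    intro a b hab
    have := congrArg List.dropLast hab
    simpa using this
  have injT : Function.Injective (fun w : List Bool => w ++ [true]) := by
    intro a b hab
    have := congrArg List.dropLast hab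
    simpa using this
  have hU : Sset (n + 1) = ((fun w => w ++ [false]) '' A) ∪ ((fun w => w ++ [true]) '' B) := by
    ext v
    constructor
    · rintro ⟨hbv, hlv⟩
      have hne : v ≠ [] := by
        intro h; rw [h] at hlv; simp at hlv
      have heq := List.dropLast_append_getLast hne
      have hwin : v.dropLast <:+: v := by
        refine List.IsPrefix.isInfix ⟨[v.getLast hne], heq⟩
      have hbw : BalancedWord 1 v.dropLast := bal_infix hbv hwin
      have hlw : v.dropLast.length = n := by
        rw [List.length_dropLast]; omega
      cases hb : v.getLast hne with
      | false =>
        left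
        refine ⟨v.dropLast, ⟨⟨hbw, hlw⟩, ?_⟩, ?_⟩
        · rw [← hb, heq]; exact hbv
        · simp only []; rw [← hb, heq]
      | true =>
        right
        refine ⟨v.dropLast, ⟨⟨hbw, hlw⟩, ?_⟩, ?_⟩
        · rw [← hb, heq]; exact hbv
        · simp only []; rw [← hb, heq]
    · rintro (⟨w, ⟨⟨_, hl⟩, hbe⟩, rfl⟩ | ⟨w, ⟨⟨_, hl⟩, hbe⟩, rfl⟩) <;>
        exact ⟨hbe, by simp [hl]⟩
  have hdisj : Disjoint ((fun w => w ++ [false]) '' A) ((fun w => w ++ [true]) '' B) := by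
    apply Set.disjoint_left.mpr
    rintro x ⟨w, _, rfl⟩ ⟨w', _, hx⟩
    have := congrArg List.getLast? hx
    simp only [List.getLast?_concat] at this
    exact Bool.noConfusion (Option.some.inj this)
  have hAB : A ∪ B = Sset n := by
    ext w
    constructor
    · rintro (⟨h, _⟩ | ⟨h, _⟩) <;> exact h
    · intro hw
      rcases extend_right hw.1 with h | h
      · exact Or.inl ⟨hw, h⟩
      · exact Or.inr ⟨hw, h⟩
  have hI : A ∩ B = RSet n := by
    ext w
    constructor
    · rintro ⟨⟨⟨_, hl⟩, h0⟩, ⟨_, h1⟩⟩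
      exact ⟨⟨h0, h1⟩, hl⟩
    · rintro ⟨⟨h0, h1⟩, hl⟩
      have hbw : BalancedWord 1 w := bal_infix h0 (List.prefix_append w [false]).isInfix
      exact ⟨⟨⟨hbw, hl⟩, h0⟩, ⟨⟨hbw, hl⟩, h1⟩⟩
  have hie := Set.ncard_union_add_ncard_inter A B finA finB
  rw [hAB, hI] at hie
  have : (Sset (n + 1)).ncard = A.ncard + B.ncard := by
    rw [hU, Set.ncard_union_eq hdisj (finA.image _) (finB.image _),
      Set.ncard_image_of_injective _ injF, Set.ncard_image_of_injective _ injT]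
  omega

lemma ncard_S0 : (Sset 0).ncard = 1 := by
  have h : Sset 0 = {([] : List Bool)} := by
    ext w
    constructor
    · rintro ⟨_, hl⟩
      exact List.length_eq_zero_iff.mp hl
    · rintro rfl
      exact ⟨bal_nil, rfl⟩
  rw [h, Set.ncard_singleton]

lemma ncard_S (n : ℕ) :
    (Sset n).ncard = 1 + ∑ m ∈ Finset.range n, ∑ q ∈ Finset.Icc 1 (m + 1), Nat.totient q := by
  induction n with
  | zero => simpa using ncard_S0
  | succ n ih =>
    rw [step n, ih, ncard_RSet, ncard_LSet, Finset.sum_range_succ]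
    omega

lemma sum_swap_eq (n : ℕ) :
    ∑ i ∈ Finset.Icc 1 n, ∑ j ∈ Finset.Icc 1 i, Nat.totient j =
      ∑ i ∈ Finset.Icc 1 n, (n - i + 1) * Nat.totient i := by
  induction n with
  | zero => simp
  | succ n ih =>
    have e1 : ∑ i ∈ Finset.Icc 1 (n + 1), ∑ j ∈ Finset.Icc 1 i, Nat.totient j
        = (∑ i ∈ Finset.Icc 1 n, ∑ j ∈ Finset.Icc 1 i, Nat.totient j)
          + ∑ j ∈ Finset.Icc 1 (n + 1), Nat.totient j :=
      Finset.sum_Icc_succ_top (by omega) _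
    have e2 : ∑ i ∈ Finset.Icc 1 (n + 1), (n + 1 - i + 1) * Nat.totient i
        = (∑ i ∈ Finset.Icc 1 n, (n + 1 - i + 1) * Nat.totient i)
          + (n + 1 - (n + 1) + 1) * Nat.totient (n + 1) :=
      Finset.sum_Icc_succ_top (by omega) _
    have e3 : ∑ i ∈ Finset.Icc 1 n, (n + 1 - i + 1) * Nat.totient i
        = (∑ i ∈ Finset.Icc 1 n, (n - i + 1) * Nat.totient i)
          + ∑ i ∈ Finset.Icc 1 n, Nat.totient i := by
      rw [← Finset.sum_add_distrib]
      apply Finset.sum_congr rfl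
      intro i hi
      rw [Finset.mem_Icc] at hi
      have hx : n + 1 - i + 1 = (n - i + 1) + 1 := by omega
      rw [hx, Nat.add_mul, Nat.one_mul]
    have e4 : ∑ j ∈ Finset.Icc 1 (n + 1), Nat.totient j
        = (∑ j ∈ Finset.Icc 1 n, Nat.totient j) + Nat.totient (n + 1) :=
      Finset.sum_Icc_succ_top (by omega) _
    have h2 : n + 1 - (n + 1) + 1 = 1 := by omega
    rw [e1, e2, e3, e4, ih, h2, Nat.one_mul]
    omega

lemma range_to_Icc (n : ℕ) :
    ∑ m ∈ Finset.range n, ∑ q ∈ Finset.Icc 1 (m + 1), Nat.totient q =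
      ∑ i ∈ Finset.Icc 1 n, ∑ j ∈ Finset.Icc 1 i, Nat.totient j := by
  induction n with
  | zero => simp
  | succ n ih =>
    have e1 : ∑ i ∈ Finset.Icc 1 (n + 1), ∑ j ∈ Finset.Icc 1 i, Nat.totient j
        = (∑ i ∈ Finset.Icc 1 n, ∑ j ∈ Finset.Icc 1 i, Nat.totient j)
          + ∑ j ∈ Finset.Icc 1 (n + 1), Nat.totient j :=
      Finset.sum_Icc_succ_top (by omega) _
    rw [Finset.sum_range_succ, ih, e1]

end BalCount


/-- the number of 1-balanced words of length `n` equals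
`1 + ∑_{i=1}^{n} (n − i + 1)·φ(i) = 1 + ∑_{i=1}^{n} ∑_{j=1}^{i} φ(j)`. -/
theorem balanced_complexity (n : ℕ) :
    Set.ncard {w : List Bool | BalancedWord 1 w ∧ w.length = n} =
        1 + ∑ i ∈ Finset.Icc 1 n, (n - i + 1) * Nat.totient i ∧
    Set.ncard {w : List Bool | BalancedWord 1 w ∧ w.length = n} =
        1 + ∑ i ∈ Finset.Icc 1 n, ∑ j ∈ Finset.Icc 1 i, Nat.totient j := by
  have h := BalCount.ncard_S n
  rw [BalCount.range_to_Icc] at h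
  constructor
  · rw [← BalCount.sum_swap_eq]
    exact h
  · exact h
end

section
/- Let L be a nonempty factorial and extendable language of binary words. Then for every n ≥ 0, s_{n+1}(L) − s_n(L) = sb_n(L) − wb_n(L), where s_n(L) = p_{n+1}(L) − p_n(L). -/
section SDBAux
open scoped Classical
open Finset

lemma SDB_finite_length_eq : ∀ n : ℕ, {w : List Bool | w.length = n}.Finite
  | 0 => (Set.finite_singleton ([] : List Bool)).subset (by
      intro w hw
      simp only [Set.mem_setOf_eq, List.length_eq_zero_iff] at hw
      simp [hw])
  | (n+1) => (((Set.finite_univ (α := Bool)).prod (SDB_finite_length_eq n)).image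
      (fun p => p.1 :: p.2)).subset (by
      rintro (_ | ⟨a, l⟩) hw
      · simp at hw
      · exact ⟨(a, l), ⟨trivial, by simpa using hw⟩, rfl⟩)

noncomputable def SDB_Fn (L : Set (List Bool)) (n : ℕ) : Finset (List Bool) :=
  ((SDB_finite_length_eq n).toFinset).filter (· ∈ L)

lemma SDB_mem_Fn {L : Set (List Bool)} {n w} : w ∈ SDB_Fn L n ↔ w ∈ L ∧ w.length = n := by
  simp [SDB_Fn, and_comm, Set.Finite.mem_toFinset]

lemma SDB_pcount_eq (L : Set (List Bool)) (n : ℕ) : pcount L n = (SDB_Fn L n).card := by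
  rw [pcount, ← Set.ncard_coe_finset]
  congr 1; ext w; simp [SDB_mem_Fn]

noncomputable def SDB_rset (L : Set (List Bool)) (w : List Bool) : Finset Bool :=
  univ.filter (fun b => w ++ [b] ∈ L)
noncomputable def SDB_lset (L : Set (List Bool)) (w : List Bool) : Finset Bool :=
  univ.filter (fun a => a :: w ∈ L)
noncomputable def SDB_eset (L : Set (List Bool)) (w : List Bool) : Finset (Bool × Bool) :=
  univ.filter (fun p => p.1 :: (w ++ [p.2]) ∈ L)

lemma SDB_sum_rset (L : Set (List Bool)) (hf : FactorialLang L) (n : ℕ) :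
    (SDB_Fn L (n+1)).card = ∑ w ∈ SDB_Fn L n, (SDB_rset L w).card := by
  rw [Finset.card_eq_sum_card_fiberwise (f := List.dropLast) (t := SDB_Fn L n) ?_]
  · refine Finset.sum_congr rfl fun w hw => ?_
    rw [SDB_mem_Fn] at hw
    refine (Finset.card_bij (fun b _ => w ++ [b]) ?_ ?_ ?_).symm
    · intro b hb
      simp only [SDB_rset, mem_filter, mem_univ, true_and] at hb
      simp [mem_filter, SDB_mem_Fn, hb, hw.2, List.dropLast_concat]
    · intro b1 _ b2 _ h; simpa using h
    · intro w' hw'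
      simp only [mem_filter, SDB_mem_Fn] at hw'
      have hne : w' ≠ [] := by
        intro h; rw [h] at hw'; simp at hw'
      have hrec : w'.dropLast ++ [w'.getLast hne] = w' := List.dropLast_append_getLast hne
      rw [hw'.2] at hrec
      refine ⟨w'.getLast hne, ?_, hrec⟩
      simp only [SDB_rset, mem_filter, mem_univ, true_and]
      rw [hrec]; exact hw'.1.1
  · intro w' hw'
    rw [mem_coe, SDB_mem_Fn] at hw' ⊢
    exact ⟨hf _ hw'.1 _ (List.dropLast_prefix w').isInfix, by simp [hw'.2]⟩

lemma SDB_sum_lset (L : Set (List Bool)) (hf : FactorialLang L) (n : ℕ) :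
    (SDB_Fn L (n+1)).card = ∑ w ∈ SDB_Fn L n, (SDB_lset L w).card := by
  rw [Finset.card_eq_sum_card_fiberwise (f := List.tail) (t := SDB_Fn L n) ?_]
  · refine Finset.sum_congr rfl fun w hw => ?_
    rw [SDB_mem_Fn] at hw
    refine (Finset.card_bij (fun a _ => a :: w) ?_ ?_ ?_).symm
    · intro a ha
      simp only [SDB_lset, mem_filter, mem_univ, true_and] at ha
      simp [mem_filter, SDB_mem_Fn, ha, hw.2]
    · intro a1 _ a2 _ h; simpa using h
    · rintro (_ | ⟨a, t⟩) hw'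
      · simp [SDB_mem_Fn] at hw'
      · simp only [mem_filter, SDB_mem_Fn, List.tail_cons] at hw'
        refine ⟨a, ?_, by rw [hw'.2]⟩
        simp only [SDB_lset, mem_filter, mem_univ, true_and]
        rw [← hw'.2]
        exact hw'.1.1
  · intro w' hw'
    rw [mem_coe, SDB_mem_Fn] at hw' ⊢
    exact ⟨hf _ hw'.1 _ (List.tail_suffix w').isInfix, by simp [hw'.2]⟩

lemma SDB_sum_eset (L : Set (List Bool)) (hf : FactorialLang L) (n : ℕ) :
    (SDB_Fn L (n+2)).card = ∑ w ∈ SDB_Fn L n, (SDB_eset L w).card := by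
  rw [Finset.card_eq_sum_card_fiberwise (f := fun w' => w'.tail.dropLast) (t := SDB_Fn L n) ?_]
  · refine Finset.sum_congr rfl fun w hw => ?_
    rw [SDB_mem_Fn] at hw
    refine (Finset.card_bij (fun p _ => p.1 :: (w ++ [p.2])) ?_ ?_ ?_).symm
    · intro p hp
      simp only [SDB_eset, mem_filter, mem_univ, true_and] at hp
      simp [mem_filter, SDB_mem_Fn, hp, hw.2, List.dropLast_concat]
    · intro p1 _ p2 _ h
      simp only [List.cons.injEq, List.append_cancel_left_eq, List.cons.injEq] at h
      exact Prod.ext h.1 h.2.1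
    · rintro (_ | ⟨a, u⟩) hw'
      · simp [SDB_mem_Fn] at hw'
      · simp only [mem_filter, SDB_mem_Fn, List.tail_cons, List.length_cons] at hw'
        obtain ⟨⟨hmem, hlen⟩, hfib⟩ := hw'
        have hne : u ≠ [] := List.ne_nil_of_length_pos (by omega)
        have hrec : u.dropLast ++ [u.getLast hne] = u := List.dropLast_append_getLast hne
        rw [hfib] at hrec
        refine ⟨(a, u.getLast hne), ?_, ?_⟩
        · simp only [SDB_eset, mem_filter, mem_univ, true_and]
          rw [hrec]; exact hmem
        · show a :: (w ++ [u.getLast hne]) = a :: u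
          rw [hrec]
  · intro w' hw'
    rw [mem_coe, SDB_mem_Fn] at hw' ⊢
    refine ⟨hf _ hw'.1 _ ((List.dropLast_prefix w'.tail).isInfix.trans
      (List.tail_suffix w').isInfix), ?_⟩
    simp [hw'.2]

lemma SDB_key (L : Set (List Bool)) (hf : FactorialLang L) (he : ExtendableLang L)
    {w : List Bool} (hw : w ∈ L) :
    ((SDB_eset L w).card : ℤ) - (SDB_lset L w).card - (SDB_rset L w).card + 1 =
      (if StrongBispecial L w then (1:ℤ) else 0) -
        (if WeakBispecial L w then (1:ℤ) else 0) := by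
  obtain ⟨⟨a0, ha0⟩, ⟨b0, hb0⟩⟩ := he w hw
  have hA : (SDB_eset L w).image Prod.fst = SDB_lset L w := by
    ext a
    simp only [mem_image, SDB_eset, SDB_lset, mem_filter, mem_univ, true_and]
    constructor
    · rintro ⟨⟨a', b⟩, hab, rfl⟩
      exact hf _ hab _ ⟨[], [b], by simp⟩
    · intro ha
      obtain ⟨b, hb⟩ := (he _ ha).2
      exact ⟨(a, b), by simpa using hb, rfl⟩
  have hB : (SDB_eset L w).image Prod.snd = SDB_rset L w := by
    ext b
    simp only [mem_image, SDB_eset, SDB_rset, mem_filter, mem_univ, true_and]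
    constructor
    · rintro ⟨⟨a, b'⟩, hab, rfl⟩
      exact hf _ hab _ ⟨[a], [], by simp⟩
    · intro hb
      obtain ⟨a, ha⟩ := (he _ hb).1
      exact ⟨(a, b), ha, rfl⟩
  have hsub : SDB_eset L w ⊆ SDB_lset L w ×ˢ SDB_rset L w := by
    intro p hp
    rw [mem_product, ← hA, ← hB]
    exact ⟨mem_image_of_mem _ hp, mem_image_of_mem _ hp⟩
  have h1l : 1 ≤ (SDB_lset L w).card :=
    card_pos.2 ⟨a0, by simp [SDB_lset, ha0]⟩
  have h1r : 1 ≤ (SDB_rset L w).card :=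
    card_pos.2 ⟨b0, by simp [SDB_rset, hb0]⟩
  have h2l : (SDB_lset L w).card ≤ 2 := le_trans (card_le_univ _) (by simp)
  have h2r : (SDB_rset L w).card ≤ 2 := le_trans (card_le_univ _) (by simp)
  have hgl : (SDB_lset L w).card ≤ (SDB_eset L w).card := by
    rw [← hA]; exact card_image_le
  have hgr : (SDB_rset L w).card ≤ (SDB_eset L w).card := by
    rw [← hB]; exact card_image_le
  have hle : (SDB_eset L w).card ≤ (SDB_lset L w).card * (SDB_rset L w).card := by
    calc (SDB_eset L w).card ≤ (SDB_lset L w ×ˢ SDB_rset L w).card := card_le_card hsub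
    _ = _ := by rw [card_product]
  have hext : extCount L w = (SDB_eset L w).card := by
    rw [extCount, ← Set.ncard_coe_finset]
    congr 1; ext p; simp [SDB_eset]
  have hbis : Bispecial L w ↔ (SDB_lset L w).card = 2 ∧ (SDB_rset L w).card = 2 := by
    constructor
    · rintro ⟨-, h1, h2, h3, h4⟩
      constructor
      · have : SDB_lset L w = univ := eq_univ_iff_forall.2 fun a => by
          cases a <;> simp [SDB_lset, h1, h2]
        rw [this]; simp
      · have : SDB_rset L w = univ := eq_univ_iff_forall.2 fun b => by
          cases b <;> simp [SDB_rset, h3, h4]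
        rw [this]; simp
    · rintro ⟨h1, h2⟩
      have e1 : SDB_lset L w = univ := eq_univ_of_card _ (by simpa using h1)
      have e2 : SDB_rset L w = univ := eq_univ_of_card _ (by simpa using h2)
      have m1 : ∀ a : Bool, a :: w ∈ L := fun a => by
        have := e1 ▸ mem_univ a; simpa [SDB_lset] using this
      have m2 : ∀ b : Bool, w ++ [b] ∈ L := fun b => by
        have := e2 ▸ mem_univ b; simpa [SDB_rset] using this
      exact ⟨hw, m1 false, m1 true, m2 false, m2 true⟩
  rcases (by omega : (SDB_lset L w).card = 1 ∨ (SDB_lset L w).card = 2) with hla | hla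
  · have hnb : ¬ Bispecial L w := fun h => by have := hbis.1 h; omega
    rw [if_neg (fun h => hnb h.1), if_neg (fun h => hnb h.1)]
    rw [hla, one_mul] at hle
    omega
  · rcases (by omega : (SDB_rset L w).card = 1 ∨ (SDB_rset L w).card = 2) with hrb | hrb
    · have hnb : ¬ Bispecial L w := fun h => by have := hbis.1 h; omega
      rw [if_neg (fun h => hnb h.1), if_neg (fun h => hnb h.1)]
      rw [hrb, mul_one] at hle
      omega
    · have hb : Bispecial L w := hbis.2 ⟨hla, hrb⟩
      have hsiff : StrongBispecial L w ↔ (SDB_eset L w).card = 4 :=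
        ⟨fun h => hext.symm.trans h.2, fun h => ⟨hb, hext.trans h⟩⟩
      have hwiff : WeakBispecial L w ↔ (SDB_eset L w).card = 2 :=
        ⟨fun h => hext.symm.trans h.2, fun h => ⟨hb, hext.trans h⟩⟩
      rw [hla, hrb] at hle
      rcases (by omega : (SDB_eset L w).card = 2 ∨ (SDB_eset L w).card = 3 ∨
          (SDB_eset L w).card = 4) with h | h | h
      · rw [if_neg (fun hs => absurd (hsiff.1 hs) (by omega)),
          if_pos (hwiff.2 h)]
        omega
      · rw [if_neg (fun hs => absurd (hsiff.1 hs) (by omega)),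
          if_neg (fun hs => absurd (hwiff.1 hs) (by omega))]
        omega
      · rw [if_pos (hsiff.2 h), if_neg (fun hs => absurd (hwiff.1 hs) (by omega))]
        omega

end SDBAux

section SDBAux2
open scoped Classical
open Finset

lemma SDB_sb_eq (L : Set (List Bool)) (n : ℕ) :
    sb L n = ((SDB_Fn L n).filter (fun w => StrongBispecial L w)).card := by
  rw [sb, ← Set.ncard_coe_finset]
  congr 1; ext w
  simp only [Set.mem_setOf_eq, coe_filter, SDB_mem_Fn]
  constructor
  · rintro ⟨hs, hl⟩; exact ⟨⟨hs.1.1, hl⟩, hs⟩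
  · rintro ⟨⟨_, hl⟩, hs⟩; exact ⟨hs, hl⟩

lemma SDB_wb_eq (L : Set (List Bool)) (n : ℕ) :
    wb L n = ((SDB_Fn L n).filter (fun w => WeakBispecial L w)).card := by
  rw [wb, ← Set.ncard_coe_finset]
  congr 1; ext w
  simp only [Set.mem_setOf_eq, coe_filter, SDB_mem_Fn]
  constructor
  · rintro ⟨hs, hl⟩; exact ⟨⟨hs.1.1, hl⟩, hs⟩
  · rintro ⟨⟨_, hl⟩, hs⟩; exact ⟨hs, hl⟩

/-- for a nonempty factorial extendable language,
`s_{n+1}(L) − s_n(L) = sb_n(L) − wb_n(L)` where `s_n(L) = p_{n+1}(L) − p_n(L)`. -/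
theorem second_difference_bispecial (L : Set (List Bool)) (hne : L.Nonempty)
    (hf : FactorialLang L) (he : ExtendableLang L) (n : ℕ) :
    ((pcount L (n + 2) : ℤ) - (pcount L (n + 1) : ℤ)) -
        ((pcount L (n + 1) : ℤ) - (pcount L n : ℤ)) =
      (sb L n : ℤ) - (wb L n : ℤ) := by
  classical
  rw [SDB_pcount_eq, SDB_pcount_eq, SDB_pcount_eq, SDB_sb_eq, SDB_wb_eq]
  have h1 : ((SDB_Fn L (n+2)).card : ℤ) = ∑ w ∈ SDB_Fn L n, ((SDB_eset L w).card : ℤ) := by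
    exact_mod_cast SDB_sum_eset L hf n
  have h2 : ((SDB_Fn L (n+1)).card : ℤ) = ∑ w ∈ SDB_Fn L n, ((SDB_rset L w).card : ℤ) := by
    exact_mod_cast SDB_sum_rset L hf n
  have h3 : ((SDB_Fn L (n+1)).card : ℤ) = ∑ w ∈ SDB_Fn L n, ((SDB_lset L w).card : ℤ) := by
    exact_mod_cast SDB_sum_lset L hf n
  have htot : ∑ w ∈ SDB_Fn L n,
        (((SDB_eset L w).card : ℤ) - (SDB_lset L w).card - (SDB_rset L w).card + 1)
      = ∑ w ∈ SDB_Fn L n, ((if StrongBispecial L w then (1:ℤ) else 0) -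
          (if WeakBispecial L w then (1:ℤ) else 0)) :=
    Finset.sum_congr rfl fun w hw => SDB_key L hf he (SDB_mem_Fn.1 hw).1
  rw [Finset.sum_sub_distrib, Finset.sum_add_distrib, Finset.sum_sub_distrib,
    Finset.sum_sub_distrib, Finset.sum_const, nsmul_eq_mul, mul_one,
    Finset.sum_boole, Finset.sum_boole] at htot
  linarith [htot, h1, h2, h3]
end SDBAux2
end

section
/- Let L be a factorial and extendable language of binary words containing both letters 0 and 1. Then for every n ≥ 0, p_n(L) = 1 + n + Σ_{i=0}^{n−1} Σ_{j=0}^{i−1} (sb_j(L) − wb_j(L)). -/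
/-! ### Auxiliary machinery for the proof -/

/-- All binary words of length `n`, as a finset. -/
def allW : ℕ → Finset (List Bool)
  | 0 => {[]}
  | n+1 => (Finset.univ ×ˢ allW n).image (fun p => p.1 :: p.2)

lemma mem_allW : ∀ {n : ℕ} {w : List Bool}, w ∈ allW n ↔ w.length = n := by
  intro n
  induction n with
  | zero => intro w; simp [allW, List.length_eq_zero_iff]
  | succ n ih =>
    intro w
    cases w with
    | nil => simp [allW]
    | cons a l => simp [allW, ih]

section Aux

open Classical

variable (L : Set (List Bool))

noncomputable def LnF (n : ℕ) : Finset (List Bool) := (allW n).filter (· ∈ L)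

noncomputable def rextF (v : List Bool) : Finset Bool :=
  Finset.univ.filter (fun b => v ++ [b] ∈ L)

noncomputable def tsetF (v : List Bool) : Finset Bool :=
  Finset.univ.filter (fun a => (a :: v) ++ [false] ∈ L ∧ (a :: v) ++ [true] ∈ L)

noncomputable def RSF (n : ℕ) : Finset (List Bool) :=
  (allW n).filter (fun v => v ∈ L ∧ v ++ [false] ∈ L ∧ v ++ [true] ∈ L)

noncomputable def wbF (n : ℕ) : Finset (List Bool) := (allW n).filter (WeakBispecial L)

noncomputable def sbF (n : ℕ) : Finset (List Bool) := (allW n).filter (StrongBispecial L)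

lemma pcount_eq (n : ℕ) : pcount L n = (LnF L n).card := by
  rw [pcount, ← Set.ncard_coe_finset]
  congr 1
  ext w
  simp [LnF, mem_allW, and_comm]

lemma wb_eq (n : ℕ) : wb L n = (wbF L n).card := by
  rw [wb, ← Set.ncard_coe_finset]
  congr 1
  ext w
  simp [wbF, mem_allW, and_comm]

lemma sb_eq (n : ℕ) : sb L n = (sbF L n).card := by
  rw [sb, ← Set.ncard_coe_finset]
  congr 1
  ext w
  simp [sbF, mem_allW, and_comm]

lemma extCount_eq (v : List Bool) : extCount L v =
    (((if (true :: (v ++ [true])) ∈ L then 1 else 0) +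
      (if (true :: (v ++ [false])) ∈ L then 1 else 0)) +
     ((if (false :: (v ++ [true])) ∈ L then 1 else 0) +
      (if (false :: (v ++ [false])) ∈ L then 1 else 0))) := by
  have hset : {p : Bool × Bool | (p.1 :: (v ++ [p.2])) ∈ L} =
      ↑(Finset.univ.filter (fun p : Bool × Bool => (p.1 :: (v ++ [p.2])) ∈ L)) := by
    ext p; simp
  rw [extCount, hset, Set.ncard_coe_finset, Finset.card_filter, Fintype.sum_prod_type,
    Fintype.sum_bool]
  rw [Fintype.sum_bool, Fintype.sum_bool]

lemma LnF_succ (hf : FactorialLang L) (n : ℕ) :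
    LnF L (n+1) = (LnF L n).biUnion (fun v => (rextF L v).image (fun b => v ++ [b])) := by
  ext w
  simp only [Finset.mem_biUnion, Finset.mem_image, LnF, rextF, Finset.mem_filter, mem_allW,
    Finset.mem_univ, true_and]
  constructor
  · rintro ⟨hlen, hw⟩
    have hne : w ≠ [] := by intro h; simp [h] at hlen
    refine ⟨w.dropLast, ⟨?_, ?_⟩, w.getLast hne, ?_, ?_⟩
    · simp [List.length_dropLast, hlen]
    · exact hf w hw _ (List.dropLast_prefix w).isInfix
    · rwa [List.dropLast_append_getLast hne]
    · exact List.dropLast_append_getLast hne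
  · rintro ⟨v, ⟨hlen, hv⟩, b, hb, rfl⟩
    exact ⟨by simp [hlen], hb⟩

lemma card_LnF_succ (hf : FactorialLang L) (n : ℕ) :
    (LnF L (n+1)).card = ∑ v ∈ LnF L n, (rextF L v).card := by
  rw [LnF_succ L hf n, Finset.card_biUnion]
  · exact Finset.sum_congr rfl fun v _ =>
      Finset.card_image_of_injective _ (fun b1 b2 h => by simpa using h)
  · intro v1 hv1 v2 hv2 hne
    simp only [LnF, Finset.mem_filter, mem_allW] at hv1 hv2
    rw [Function.onFun, Finset.disjoint_left]
    rintro w hw1 hw2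
    simp only [Finset.mem_image] at hw1 hw2
    obtain ⟨b1, -, rfl⟩ := hw1
    obtain ⟨b2, -, h⟩ := hw2
    apply hne
    have := congrArg List.dropLast h
    simpa [List.dropLast_concat] using this.symm

lemma card_rextF (he : ExtendableLang L) {n : ℕ} {v : List Bool} (hv : v ∈ LnF L n) :
    (rextF L v).card = 1 + (if v ∈ RSF L n then 1 else 0) := by
  simp only [LnF, Finset.mem_filter, mem_allW] at hv
  obtain ⟨hlen, hvL⟩ := hv
  obtain ⟨-, b, hb⟩ := he v hvL
  rw [rextF, Finset.card_filter, Fintype.sum_bool]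
  simp only [RSF, Finset.mem_filter, mem_allW]
  by_cases h0 : v ++ [false] ∈ L <;> by_cases h1 : v ++ [true] ∈ L <;>
    cases b <;> simp_all

lemma sum_indicator {s t : Finset (List Bool)} (h : t ⊆ s) :
    (∑ v ∈ s, (if v ∈ t then 1 else 0)) = t.card := by
  rw [Finset.sum_ite_mem, Finset.inter_eq_right.mpr h, Finset.sum_const, smul_eq_mul, mul_one]

lemma RSF_subset_LnF (n : ℕ) : RSF L n ⊆ LnF L n := by
  intro v hv
  simp only [RSF, Finset.mem_filter] at hv
  exact Finset.mem_filter.mpr ⟨hv.1, hv.2.1⟩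

lemma pcount_succ (hf : FactorialLang L) (he : ExtendableLang L) (n : ℕ) :
    (LnF L (n+1)).card = (LnF L n).card + (RSF L n).card := by
  rw [card_LnF_succ L hf n,
    Finset.sum_congr rfl (fun v hv => card_rextF L he hv), Finset.sum_add_distrib,
    Finset.sum_const, smul_eq_mul, mul_one, sum_indicator (RSF_subset_LnF L n)]

lemma RSF_succ (hf : FactorialLang L) (n : ℕ) :
    RSF L (n+1) = (RSF L n).biUnion (fun v => (tsetF L v).image (· :: v)) := by
  ext w
  simp only [RSF, tsetF, Finset.mem_biUnion, Finset.mem_image, Finset.mem_filter, mem_allW,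
    Finset.mem_univ, true_and]
  constructor
  · rintro ⟨hlen, hw, h0, h1⟩
    cases w with
    | nil => simp at hlen
    | cons a v =>
      refine ⟨v, ⟨by simpa using hlen, ?_, ?_, ?_⟩, a, ⟨h0, h1⟩, rfl⟩
      · exact hf _ hw _ (List.suffix_cons a v).isInfix
      · exact hf _ h0 _ (by
          have : v ++ [false] <:+ (a :: v) ++ [false] := by
            simpa using List.suffix_cons a (v ++ [false])
          exact this.isInfix)
      · exact hf _ h1 _ (by
          have : v ++ [true] <:+ (a :: v) ++ [true] := by
            simpa using List.suffix_cons a (v ++ [true])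
          exact this.isInfix)
  · rintro ⟨v, ⟨hlen, hv, hv0, hv1⟩, a, ⟨h0, h1⟩, rfl⟩
    exact ⟨by simp [hlen], hf _ h0 _ ((List.prefix_append (a :: v) [false]).isInfix), h0, h1⟩

lemma card_RSF_succ (hf : FactorialLang L) (n : ℕ) :
    (RSF L (n+1)).card = ∑ v ∈ RSF L n, (tsetF L v).card := by
  rw [RSF_succ L hf n, Finset.card_biUnion]
  · exact Finset.sum_congr rfl fun v _ =>
      Finset.card_image_of_injective _ (fun b1 b2 h => by simpa using h)
  · intro v1 hv1 v2 hv2 hne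
    rw [Function.onFun, Finset.disjoint_left]
    rintro w hw1 hw2
    simp only [Finset.mem_image] at hw1 hw2
    obtain ⟨b1, -, rfl⟩ := hw1
    obtain ⟨b2, -, h⟩ := hw2
    exact hne (by simpa using congrArg List.tail h.symm)

lemma card_tsetF (hf : FactorialLang L) (he : ExtendableLang L) {n : ℕ} {v : List Bool}
    (hv : v ∈ RSF L n) :
    (tsetF L v).card + (if v ∈ wbF L n then 1 else 0)
      = 1 + (if v ∈ sbF L n then 1 else 0) := by
  simp only [RSF, Finset.mem_filter, mem_allW] at hv
  obtain ⟨hlen, hvL, h0, h1⟩ := hv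
  by_cases hls : (false :: v) ∈ L ∧ (true :: v) ∈ L
  · obtain ⟨hl0, hl1⟩ := hls
    have hbs : Bispecial L v := ⟨hvL, hl0, hl1, h0, h1⟩
    obtain ⟨-, bf, hbf⟩ := he _ hl0
    obtain ⟨-, bt, hbt⟩ := he _ hl1
    have hE := extCount_eq L v
    rw [tsetF, Finset.card_filter, Fintype.sum_bool]
    simp only [wbF, sbF, Finset.mem_filter, mem_allW, WeakBispecial, StrongBispecial, hbs, hlen,
      and_true, true_and, List.cons_append] at *
    by_cases pff : (false :: (v ++ [false])) ∈ L <;>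
    by_cases pft : (false :: (v ++ [true])) ∈ L <;>
    by_cases ptf : (true :: (v ++ [false])) ∈ L <;>
    by_cases ptt : (true :: (v ++ [true])) ∈ L <;>
      cases bf <;> cases bt <;> simp_all <;> omega
  · obtain ⟨a, haf⟩ := (he _ h0).1
    obtain ⟨a', hat⟩ := (he _ h1).1
    have hav : (a :: v) ∈ L := hf _ haf _ ((List.prefix_append (a :: v) [false]).isInfix)
    have hav' : (a' :: v) ∈ L := hf _ hat _ ((List.prefix_append (a' :: v) [true]).isInfix)
    have haa : a' = a := by
      by_contra hne
      exact hls (by cases a <;> cases a' <;> simp_all)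
    rw [haa] at hat hav'
    have hnb : ¬ Bispecial L v := fun hb => hls ⟨hb.2.1, hb.2.2.1⟩
    have hnother : ((!a) :: v) ∉ L := fun h => hls (by cases a <;> simp_all)
    have hp : ∀ b, ((!a) :: v) ++ [b] ∉ L := fun b h =>
      hnother (hf _ h _ (List.prefix_append _ _).isInfix)
    have h2 : (tsetF L v).card = 1 := by
      rw [tsetF, Finset.card_filter, Fintype.sum_bool]
      cases a
      · simp only [Bool.not_false, List.cons_append] at hp
        simp [hp false, hp true, haf, hat]
      · simp only [Bool.not_true, List.cons_append] at hp
        simp [hp false, hp true, haf, hat]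
    have hw : v ∉ wbF L n := fun h => hnb (Finset.mem_filter.mp h).2.1
    have hs : v ∉ sbF L n := fun h => hnb (Finset.mem_filter.mp h).2.1
    simp [h2, hw, hs]

lemma wbF_subset_RSF (n : ℕ) : wbF L n ⊆ RSF L n := by
  intro v hv
  simp only [wbF, Finset.mem_filter] at hv
  obtain ⟨h, ⟨hb, -⟩⟩ := hv
  exact Finset.mem_filter.mpr ⟨h, hb.1, hb.2.2.2⟩

lemma sbF_subset_RSF (n : ℕ) : sbF L n ⊆ RSF L n := by
  intro v hv
  simp only [sbF, Finset.mem_filter] at hv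
  obtain ⟨h, ⟨hb, -⟩⟩ := hv
  exact Finset.mem_filter.mpr ⟨h, hb.1, hb.2.2.2⟩

lemma RSF_rec (hf : FactorialLang L) (he : ExtendableLang L) (n : ℕ) :
    (RSF L (n+1)).card + (wbF L n).card = (RSF L n).card + (sbF L n).card := by
  rw [card_RSF_succ L hf n, ← sum_indicator (wbF_subset_RSF L n),
    ← sum_indicator (sbF_subset_RSF L n), ← Finset.sum_add_distrib]
  rw [Finset.sum_congr rfl (fun v hv => card_tsetF L hf he hv)]
  simp [Finset.sum_add_distrib]

lemma LnF_zero (hnil : [] ∈ L) : LnF L 0 = {[]} := by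
  ext w
  simp only [LnF, Finset.mem_filter, mem_allW, List.length_eq_zero_iff, Finset.mem_singleton]
  exact ⟨fun h => h.1, fun h => ⟨h, h ▸ hnil⟩⟩

lemma RSF_zero (hnil : [] ∈ L) (h0 : [false] ∈ L) (h1 : [true] ∈ L) : RSF L 0 = {[]} := by
  ext w
  simp only [RSF, Finset.mem_filter, mem_allW, List.length_eq_zero_iff, Finset.mem_singleton]
  exact ⟨fun h => h.1, fun h => ⟨h, by subst h; exact ⟨hnil, h0, h1⟩⟩⟩

end Aux

/-- for a factorial extendable language containing both letters,
`p_n(L) = 1 + n + ∑_{i=0}^{n−1} ∑_{j=0}^{i−1} (sb_j(L) − wb_j(L))`. -/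
theorem complexity_from_bispecials (L : Set (List Bool)) (hf : FactorialLang L)
    (he : ExtendableLang L) (h0 : [false] ∈ L) (h1 : [true] ∈ L) (n : ℕ) :
    (pcount L n : ℤ) =
      1 + n + ∑ i ∈ Finset.range n, ∑ j ∈ Finset.range i,
        ((sb L j : ℤ) - (wb L j : ℤ)) := by
  classical
  have hnil : [] ∈ L := hf [false] h0 [] ⟨[], [false], rfl⟩
  have hs : ∀ m : ℕ, ((RSF L m).card : ℤ)
      = 1 + ∑ j ∈ Finset.range m, ((sb L j : ℤ) - (wb L j : ℤ)) := by
    intro m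
    induction m with
    | zero => simp [RSF_zero L hnil h0 h1]
    | succ m ih =>
      have h := RSF_rec L hf he m
      rw [Finset.sum_range_succ, ← add_assoc, ← ih, sb_eq L m, wb_eq L m]
      omega
  have hp : ∀ m : ℕ, ((pcount L m : ℤ))
      = 1 + ∑ i ∈ Finset.range m, ((RSF L i).card : ℤ) := by
    intro m
    induction m with
    | zero => simp [pcount_eq, LnF_zero L hnil]
    | succ m ih =>
      have h := pcount_succ L hf he m
      rw [Finset.sum_range_succ, ← add_assoc, ← ih, pcount_eq L (m+1), pcount_eq L m] at *
      omega
  rw [hp n, Finset.sum_congr rfl (fun i _ => hs i), Finset.sum_add_distrib,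
    Finset.sum_const, Finset.card_range]
  push_cast
  ring
end
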